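/- arXiv:1609.06875 — 11 statements merged into one kernel-verified Lean document; each statement's English description precedes it below -/
import Mathlib

section
/- Suppose (c_k)_{k≥1} is a log-convex sequence of nonnegative real numbers with c_1² ≤ c_2. Then the sequences (a_k)_{k≥0} and (b_k)_{k≥0} defined by the exponential formula satisfy, for every k ≥ 1: a_k² ≤ a_{k−1}·a_{k+1} and (k+1)·b_k² ≤ k·b_{k−1}·b_{k+1}. -/
set_option maxHeartbeats 1600000

/-- If `(c k)_{k ≥ 1}` is a nonnegative log-convex sequence with
`c 1 ^ 2 ≤ c 2`, then `(a k)` and `(b k)` from the exponential formula satisfy,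
for every `k ≥ 1`, `a k ^ 2 ≤ a (k-1) * a (k+1)` and
`(k+1) * b k ^ 2 ≤ k * b (k-1) * b (k+1)`. -/
theorem stmt3 (c a b : ℕ → ℝ)
    (hc_nonneg : ∀ k : ℕ, 1 ≤ k → 0 ≤ c k)
    (hc_logconvex : ∀ k : ℕ, 1 ≤ k → c (k + 1) ^ 2 ≤ c k * c (k + 2))
    (hc12 : c 1 ^ 2 ≤ c 2)
    (ha0 : a 0 = 1)
    (harec : ∀ n : ℕ, ((n : ℝ) + 1) * a (n + 1)
      = ∑ j ∈ Finset.Icc 1 (n + 1), c j * a (n + 1 - j))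
    (hb : ∀ k : ℕ, b k = (Nat.factorial k : ℝ) * a k) :
    ∀ k : ℕ, 1 ≤ k →
      a k ^ 2 ≤ a (k - 1) * a (k + 1) ∧
      ((k : ℝ) + 1) * b k ^ 2 ≤ (k : ℝ) * (b (k - 1) * b (k + 1)) := by
  -- recursion in `range` form
  have hr : ∀ m : ℕ, ((m : ℝ) + 1) * a (m + 1)
      = ∑ i ∈ Finset.range (m + 1), c (i + 1) * a (m - i) := by
    intro m
    rw [harec m, ← Finset.Ico_add_one_right_eq_Icc, Finset.sum_Ico_eq_sum_range]
    have h1 : m + 1 + 1 - 1 = m + 1 := by omega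
    rw [h1]
    exact Finset.sum_congr rfl fun i _ => by
      rw [show m + 1 - (1 + i) = m - i by omega, show 1 + i = i + 1 by omega]
  -- nonnegativity of a
  have hanneg : ∀ m : ℕ, 0 ≤ a m := by
    intro m
    induction m using Nat.strong_induction_on with
    | _ m ih =>
      match m with
      | 0 => rw [ha0]; norm_num
      | (t+1) =>
        have hpos : (0:ℝ) < (t:ℝ) + 1 := by positivity
        have hs : 0 ≤ ∑ i ∈ Finset.range (t + 1), c (i + 1) * a (t - i) := by
          apply Finset.sum_nonneg
          intro i hi
          exact mul_nonneg (hc_nonneg (i+1) (by omega)) (ih (t - i) (by omega))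
        have := hr t
        nlinarith [this]
  -- the key log-convexity statement for `a`
  have key : ∀ n : ℕ, 1 ≤ n → a n ^ 2 ≤ a (n - 1) * a (n + 1) := by
    have ha1 : a 1 = c 1 := by
      have := hr 0
      simp [ha0] at this
      linarith
    rcases eq_or_lt_of_le (hc_nonneg 1 le_rfl) with h0 | hc1pos
    · -- degenerate case : c 1 = 0, hence all c vanish and all a (k≥1) vanish
      have hc0 : c 1 = 0 := h0.symm
      have czero : ∀ j : ℕ, 1 ≤ j → c j = 0 := by
        intro j hj
        induction j, hj using Nat.le_induction with
        | base => exact hc0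
        | succ j hj ihj =>
          have h := hc_logconvex j hj
          rw [ihj] at h
          have h2 : c (j+1) ^ 2 ≤ 0 := by linarith [h]
          nlinarith [sq_nonneg (c (j+1)), h2]
      have azero : ∀ m : ℕ, 1 ≤ m → a m = 0 := by
        intro m hm
        obtain ⟨t, rfl⟩ : ∃ t, m = t + 1 := ⟨m - 1, by omega⟩
        have h := hr t
        have hs : ∑ i ∈ Finset.range (t + 1), c (i + 1) * a (t - i) = 0 := by
          apply Finset.sum_eq_zero
          intro i _
          rw [czero (i+1) (by omega), zero_mul]
        rw [hs] at h
        have hpos : (0:ℝ) < (t:ℝ) + 1 := by positivity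
        nlinarith [h]
      intro n hn
      rw [azero n hn, azero (n+1) (by omega)]
      norm_num
    · -- main case : c 1 > 0
      have cpos : ∀ j : ℕ, 1 ≤ j → 0 < c j := by
        have hpair : ∀ j : ℕ, 1 ≤ j → 0 < c j ∧ 0 < c (j + 1) := by
          intro j hj
          induction j, hj using Nat.le_induction with
          | base => exact ⟨hc1pos, by nlinarith [hc12, hc1pos]⟩
          | succ j hj ihj =>
            obtain ⟨h1, h2⟩ := ihj
            refine ⟨h2, ?_⟩
            have h := hc_logconvex j hj
            nlinarith [pow_pos h2 2, h1]
        intro j hj; exact (hpair j hj).1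
      have cratio : ∀ i j : ℕ, 1 ≤ i → i ≤ j → c (i + 1) * c j ≤ c i * c (j + 1) := by
        intro i j hi hij
        induction j, hij using Nat.le_induction with
        | base => linarith [mul_comm (c (i+1)) (c i)]
        | succ j hj ihj =>
          have hlc := hc_logconvex j (le_trans hi hj)
          have hcj1 := cpos (j+1) (by omega)
          have hci1 := cpos (i+1) (by omega)
          have hci := cpos i hi
          have h1 : c (i+1) * c j * c (j+2) ≤ c i * c (j+1) * c (j+2) :=
            mul_le_mul_of_nonneg_right ihj (hc_nonneg (j+2) (by omega))
          have h2 : c (i+1) * (c (j+1))^2 ≤ c (i+1) * (c j * c (j+2)) :=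
            mul_le_mul_of_nonneg_left hlc hci1.le
          have h3 : (c (i+1) * c (j+1)) * c (j+1) ≤ (c i * c (j+2)) * c (j+1) := by
            nlinarith [h1, h2]
          exact le_of_mul_le_mul_right h3 hcj1
      have hc1c : ∀ i : ℕ, 1 ≤ i → c 1 * c i ≤ c (i + 1) := by
        intro i hi
        have h := cratio 1 i le_rfl hi
        have h2 : c 1 * (c 1 * c i) ≤ c 1 * c (i + 1) := by nlinarith [hc12, hc_nonneg i hi]
        exact le_of_mul_le_mul_left h2 hc1pos
      -- a grows at least geometrically with ratio c 1
      have hstep : ∀ m : ℕ, c 1 * a m ≤ a (m + 1) := by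
        intro m
        match m with
        | 0 => rw [ha0, mul_one, ha1]
        | (t+1) =>
          have h1 := hr (t+1)
          have h2 := hr t
          have hsplit : ∑ i ∈ Finset.range (t + 2), c (i + 1) * a (t + 1 - i)
              = c 1 * a (t+1) + ∑ i ∈ Finset.range (t + 1), c (i + 2) * a (t - i) := by
            rw [Finset.sum_range_succ' (fun i => c (i + 1) * a (t + 1 - i)) (t+1)]
            simp only [Nat.add_sub_add_right, Nat.sub_zero]
            ring
          have hterm : ∑ i ∈ Finset.range (t + 1), c 1 * (c (i+1) * a (t - i))
              ≤ ∑ i ∈ Finset.range (t + 1), c (i + 2) * a (t - i) := by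
            apply Finset.sum_le_sum
            intro i _
            have := hc1c (i+1) (by omega)
            have hai := hanneg (t - i)
            nlinarith [this, hai]
          rw [← Finset.mul_sum] at hterm
          rw [← h2] at hterm
          rw [hsplit] at h1
          have hpos : (0:ℝ) < (t:ℝ) + 1 + 1 := by positivity
          have hfin : ((t:ℝ)+1+1) * (c 1 * a (t+1)) ≤ ((t:ℝ)+1+1) * a (t+2) := by
            push_cast at h1
            nlinarith [h1, hterm]
          exact le_of_mul_le_mul_left hfin hpos
      have apos : ∀ m : ℕ, 0 < a m := by
        intro m
        induction m with
        | zero => rw [ha0]; norm_num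
        | succ t iht => exact lt_of_lt_of_le (mul_pos hc1pos iht) (hstep t)
      -- strong induction
      intro n
      induction n using Nat.strong_induction_on with
      | _ n ih =>
        intro hn
        match n, hn with
        | 1, _ =>
          -- a 1 ^ 2 ≤ a 0 * a 2
          have h2 := hr 1
          have : ((1:ℕ):ℝ) + 1 = 2 := by norm_num
          rw [Finset.sum_range_succ, Finset.sum_range_succ] at h2
          simp [ha0, ha1] at h2
          simp only [Nat.sub_self]
          rw [ha0, ha1, one_mul]
          nlinarith [hc12, h2]
        | (k+2), _ =>
          -- ratio monotonicity from induction hypothesis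
          have RM : ∀ d j : ℕ, j + d = k → a (j + 1) * a (k + 1) ≤ a j * a (k + 2) := by
            intro d
            induction d with
            | zero =>
              intro j hj
              have hjk : j = k := by omega
              subst hjk
              have hg := ih (j+1) (by omega) (by omega)
              simp only [Nat.add_sub_cancel] at hg
              nlinarith [hg]
            | succ d hd =>
              intro j hj
              have h1 := hd (j+1) (by omega)
              have hg := ih (j+1) (by omega) (by omega)
              simp only [Nat.add_sub_cancel] at hg
              have hp := apos (j+1)
              nlinarith [mul_le_mul_of_nonneg_right hg (apos (k+1)).le,
                mul_le_mul_of_nonneg_left h1 (apos j).le, hp, apos (k+2), apos j]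
          set K : ℝ := (k : ℝ) with hK
          have hK0 : (0:ℝ) ≤ K := Nat.cast_nonneg k
          -- the four sums
          have hrk := hr k
          have hrk1 := hr (k+1)
          have hrk2 := hr (k+2)
          push_cast at hrk hrk1 hrk2
          -- T4
          have hT4 : ∑ i ∈ Finset.range (k + 1), c (i + 1) * a (k - i) = (K + 1) * a (k+1) :=
            hrk.symm
          -- T3
          have hT3 : ∑ i ∈ Finset.range (k + 1), c (i + 1) * a (k + 1 - i)
              = (K + 2) * a (k+2) - c (k+2) := by
            rw [Finset.sum_range_succ] at hrk1
            simp only [Nat.sub_self] at hrk1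
            rw [ha0] at hrk1
            linarith [hrk1]
          -- T2
          have hT2 : ∑ i ∈ Finset.range (k + 1), c (i + 2) * a (k - i)
              = (K + 2) * a (k+2) - c 1 * a (k+1) := by
            rw [Finset.sum_range_succ' (fun i => c (i + 1) * a (k + 1 - i)) (k+1)] at hrk1
            simp only [Nat.add_sub_add_right, Nat.sub_zero] at hrk1
            linarith [hrk1]
          -- T1
          have hT1 : ∑ i ∈ Finset.range (k + 1), c (i + 2) * a (k + 1 - i)
              = (K + 3) * a (k+3) - c 1 * a (k+2) - c (k+3) := by
            rw [Finset.sum_range_succ (fun i => c (i + 1) * a (k + 2 - i)) (k+2)] at hrk2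
            rw [Finset.sum_range_succ' (fun i => c (i + 1) * a (k + 2 - i)) (k+1)] at hrk2
            rw [show (∑ x ∈ Finset.range (k+1), c (x + 1 + 1) * a (k + 2 - (x + 1)))
                = ∑ x ∈ Finset.range (k+1), c (x + 2) * a (k + 1 - x) from
              Finset.sum_congr rfl fun x _ => by congr 2 <;> omega] at hrk2
            simp only [Nat.sub_self, Nat.sub_zero] at hrk2
            rw [ha0] at hrk2
            linarith [hrk2]
          -- termwise key inequality
          have keyterm : ∀ i ∈ Finset.range (k + 1),
              c (k+3) * ((K + 1) * a (k+1)) * (c (i + 1) * a (k + 1 - i))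
                + c (k+2) * ((K + 2) * a (k+2)) * (c (i + 2) * a (k - i))
              ≤ c (k+2) * ((K + 1) * a (k+1)) * (c (i + 2) * a (k + 1 - i))
                + c (k+3) * ((K + 2) * a (k+2)) * (c (i + 1) * a (k - i)) := by
            intro i hi
            have hik : i ≤ k := by simpa using Nat.lt_succ_iff.mp (Finset.mem_range.mp hi)
            have f1 : c (i + 2) * c (k + 2) ≤ c (i + 1) * c (k + 3) := by
              have := cratio (i+1) (k+2) (by omega) (by omega)
              convert this using 2 <;> omega
            have hRM0 := RM i (k - i) (by omega)
            have hidx : k - i + 1 = k + 1 - i := by omega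
            rw [hidx] at hRM0
            -- hRM0 : a (k+1-i) * a (k+1) ≤ a (k-i) * a (k+2)
            have f2 : (K + 1) * (a (k+1) * a (k + 1 - i)) ≤ (K + 2) * (a (k+2) * a (k - i)) := by
              have h1 : (K + 1) * (a (k+1-i) * a (k+1)) ≤ (K + 1) * (a (k-i) * a (k+2)) :=
                mul_le_mul_of_nonneg_left hRM0 (by positivity)
              nlinarith [h1, mul_nonneg (apos (k-i)).le (apos (k+2)).le]
            have h1 : 0 ≤ c (i + 1) * c (k + 3) - c (i + 2) * c (k + 2) := by linarith
            have h2 : 0 ≤ (K + 2) * (a (k+2) * a (k - i)) - (K + 1) * (a (k+1) * a (k + 1 - i)) := by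
              linarith
            nlinarith [mul_nonneg h1 h2]
          have keysum := Finset.sum_le_sum keyterm
          rw [Finset.sum_add_distrib, Finset.sum_add_distrib,
            ← Finset.mul_sum, ← Finset.mul_sum, ← Finset.mul_sum, ← Finset.mul_sum,
            hT1, hT2, hT3, hT4] at keysum
          -- conclude inequality (A) after cancelling c (k+2) > 0
          have hc2pos := cpos (k+2) (by omega)
          have hA' : c (k+2) * ((K + 2) * a (k+2) * ((K + 2) * a (k+2) - c 1 * a (k+1)))
              ≤ c (k+2) * ((K + 1) * a (k+1) * ((K + 3) * a (k+3) - c 1 * a (k+2))) := by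
            nlinarith [keysum]
          have hA : (K + 2) * a (k+2) * ((K + 2) * a (k+2) - c 1 * a (k+1))
              ≤ (K + 1) * a (k+1) * ((K + 3) * a (k+3) - c 1 * a (k+2)) :=
            le_of_mul_le_mul_left hA' hc2pos
          -- final algebra
          have h2 : c 1 * a (k+1) ≤ a (k+2) := hstep (k+1)
          have h5 : c 1 * a (k+1) * a (k+2) ≤ a (k+2) * a (k+2) :=
            mul_le_mul_of_nonneg_right h2 (apos (k+2)).le
          have hposK : (0:ℝ) < (K + 1) * (K + 3) := by positivity
          have h6 : (K + 1) * (K + 3) * (a (k+2) ^ 2) ≤ (K + 1) * (K + 3) * (a (k+1) * a (k+3)) := by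
            nlinarith [hA, h5]
          have h7 : a (k+2) ^ 2 ≤ a (k+1) * a (k+3) := le_of_mul_le_mul_left h6 hposK
          simpa using h7
  -- conclusion
  intro k hk
  refine ⟨key k hk, ?_⟩
  obtain ⟨t, rfl⟩ : ∃ t, k = t + 1 := ⟨k - 1, by omega⟩
  have hkey := key (t+1) (by omega)
  simp only [Nat.add_sub_cancel] at hkey ⊢
  rw [show t+1+1 = t+2 from rfl] at hkey
  rw [hb (t+1), hb t, hb (t+2)]
  have hF : (Nat.factorial (t+1) : ℝ) = ((t:ℝ)+1) * (Nat.factorial t : ℝ) := by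
    rw [Nat.factorial_succ]; push_cast; ring
  have hF2 : (Nat.factorial (t+2) : ℝ) = ((t:ℝ)+2) * (Nat.factorial (t+1) : ℝ) := by
    rw [show t+2 = (t+1)+1 from rfl, Nat.factorial_succ]; push_cast; ring
  have hmul := mul_le_mul_of_nonneg_left hkey
    (show (0:ℝ) ≤ ((t:ℝ)+2) * (((t:ℝ)+1) * (Nat.factorial t : ℝ))^2 by positivity)
  push_cast
  rw [show t+1+1 = t+2 from rfl, hF2, hF]
  nlinarith [hmul]
end

section
/- (Hansen, log-convex case.) Let λ > 0, let (f_k)_{k≥0} be nonnegative reals, and let (P_n)_{n≥0} be nonnegative reals with P_0 > 0 satisfying the Panjer recursion (n+1)·P_{n+1} = Σ_{k=0}^n λ·(k+1)·f_{k+1}·P_{n−k} for all n ≥ 0. Assume the sequence (k·f_k)_{k≥1} is log-convex. Then (P_n)_{n≥0} is log-convex if and only if λ·f_1² − 2·f_2 ≤ 0. -/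
private lemma stmt6_strongRec {Q : ℕ → Prop} (h : ∀ n, (∀ m, m < n → Q m) → Q n) :
    ∀ n, Q n := by
  intro n
  induction n using Nat.strong_induction_on with
  | _ n ih => exact h n ih

private lemma stmt6_hard (r P : ℕ → ℝ) (hr_pos : ∀ k, 0 < r k)
    (hr01 : r 0 ^ 2 ≤ r 1)
    (hrlc : ∀ k : ℕ, r (k + 1) ^ 2 ≤ r k * r (k + 2))
    (hP0 : 0 < P 0)
    (hrec : ∀ n : ℕ, ((n : ℝ) + 1) * P (n + 1)
      = ∑ k ∈ Finset.range (n + 1), r k * P (n - k)) :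
    ∀ t : ℕ, P (t + 1) ^ 2 ≤ P t * P (t + 2) := by
  -- positivity of P
  have hPpos : ∀ n, 0 < P n := by
    apply stmt6_strongRec
    intro n ih
    cases n with
    | zero => exact hP0
    | succ m =>
      have h := hrec m
      have hs : 0 < ∑ k ∈ Finset.range (m + 1), r k * P (m - k) := by
        apply Finset.sum_pos
        · intro k hk
          exact mul_pos (hr_pos k) (ih (m - k) (by omega))
        · exact Finset.nonempty_range_add_one
      have hm : (0:ℝ) < (m : ℝ) + 1 := by positivity
      nlinarith [hs, h, hm]
  -- the augmented kernel rr with rr 0 = 1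
  set rr : ℕ → ℝ := fun k => Nat.casesOn k (1:ℝ) (fun j => r j) with hrr_def
  have hrr0 : rr 0 = (1:ℝ) := rfl
  have hrrS : ∀ k, rr (k + 1) = r k := fun _ => rfl
  -- convolution identity:  ∑_{k ≤ m} rr k * P (m-k) = (m+1) * P m
  have hconv : ∀ m : ℕ, (∑ k ∈ Finset.range (m + 1), rr k * P (m - k)) = ((m : ℝ) + 1) * P m := by
    intro m
    cases m with
    | zero =>
      rw [Finset.sum_range_one]
      simp [hrr0]
    | succ sVal =>
      rw [Finset.sum_range_succ']
      have e : ∀ k ∈ Finset.range (sVal + 1),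
          rr (k + 1) * P (sVal + 1 - (k + 1)) = r k * P (sVal - k) := by
        intro k hk
        rw [hrrS]
        have : sVal + 1 - (k + 1) = sVal - k := by omega
        rw [this]
      rw [Finset.sum_congr rfl e, ← hrec sVal]
      simp only [hrr0, Nat.sub_zero, one_mul]
      push_cast
      ring
  -- log-convexity chain for r
  have Lmono : ∀ a d : ℕ, r (a + 1) * r (a + d) ≤ r a * r (a + d + 1) := by
    intro a d
    induction d with
    | zero =>
      simp only [Nat.add_zero]
      exact le_of_eq (mul_comm _ _)
    | succ d ih =>
      have h1 := hrlc (a + d)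
      have p1 := hr_pos (a + d)
      have p2 := hr_pos (a + d + 1)
      have pa := hr_pos a
      have key : (r (a + 1) * r (a + d + 1)) * r (a + d) ≤ (r a * r (a + d + 2)) * r (a + d) := by
        nlinarith [mul_le_mul_of_nonneg_right ih p2.le, mul_le_mul_of_nonneg_left h1 pa.le]
      exact le_of_mul_le_mul_right key p1
  have L0 : ∀ b, r 0 * r b ≤ r (b + 1) := by
    intro b
    have h := Lmono 0 b
    simp only [Nat.zero_add] at h
    have h2 : r 0 ^ 2 * r b ≤ r 1 * r b := mul_le_mul_of_nonneg_right hr01 (hr_pos b).le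
    have key : (r 0 * r b) * r 0 ≤ r (b + 1) * r 0 := by nlinarith [h, h2]
    exact le_of_mul_le_mul_right key (hr_pos 0)
  have hrk : ∀ t k : ℕ, k ≤ t → r t * rr (k + 1) ≤ r (t + 1) * rr k := by
    intro t k hk
    cases k with
    | zero =>
      rw [hrrS, hrr0, mul_one]
      calc r t * r 0 = r 0 * r t := mul_comm _ _
      _ ≤ r (t + 1) := L0 t
    | succ j =>
      rw [hrrS, hrrS]
      have h := Lmono j (t - j)
      have e1 : j + (t - j) = t := by omega
      rw [e1] at h
      nlinarith [h]
  -- the key bound  r t * P (t+1) ≤ r (t+1) * P t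
  have hB : ∀ t, r t * P (t + 1) ≤ r (t + 1) * P t := by
    intro t
    have h1 := hrec t
    have h2 := hconv t
    have hterm : ∀ k ∈ Finset.range (t + 1),
        r t * (r k * P (t - k)) ≤ r (t + 1) * (rr k * P (t - k)) := by
      intro k hk
      have hk' : k ≤ t := by
        have := Finset.mem_range.mp hk; omega
      have h3 := hrk t k hk'
      have h4 : (0:ℝ) ≤ P (t - k) := (hPpos (t - k)).le
      have h6 := mul_le_mul_of_nonneg_right h3 h4
      rw [hrrS] at h6
      nlinarith [h6]
    have hsum := Finset.sum_le_sum hterm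
    rw [← Finset.mul_sum, ← Finset.mul_sum, ← h1, h2] at hsum
    have hm : (0:ℝ) < (t : ℝ) + 1 := by positivity
    nlinarith [hsum, hm]
  -- main strong induction
  apply stmt6_strongRec
  intro t IH
  -- cross log-convexity from the induction hypothesis
  have hX : ∀ d i : ℕ, i + d = t → P (i + 1) * P t ≤ P i * P (t + 1) := by
    intro d
    induction d with
    | zero =>
      intro i hi
      have : i = t := by omega
      subst this
      exact le_of_eq (mul_comm _ _)
    | succ d ihd =>
      intro i hi
      have h2 := ihd (i + 1) (by omega)
      have h3 : P (i + 1) ^ 2 ≤ P i * P (i + 2) := IH i (by omega)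
      have e1 : P (i + 1) ^ 2 * P t ≤ P i * P (i + 2) * P t :=
        mul_le_mul_of_nonneg_right h3 (hPpos t).le
      have e2 : P i * (P (i + 2) * P t) ≤ P i * (P (i + 1) * P (t + 1)) :=
        mul_le_mul_of_nonneg_left h2 (hPpos i).le
      have key : (P (i + 1) * P t) * P (i + 1) ≤ (P i * P (t + 1)) * P (i + 1) := by
        nlinarith [e1, e2]
      exact le_of_mul_le_mul_right key (hPpos (i + 1))
  -- the four sum evaluations
  have hS1 := hconv t
  have hS2 := hrec t
  have hS3 : ∑ k ∈ Finset.range (t + 1), rr k * P (t - k + 1)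
      = ((t : ℝ) + 2) * P (t + 1) - r t * P 0 := by
    have h := hconv (t + 1)
    rw [Finset.sum_range_succ] at h
    have e : ∀ k ∈ Finset.range (t + 1),
        rr k * P (t + 1 - k) = rr k * P (t - k + 1) := by
      intro k hk
      have hk' : k ≤ t := by have := Finset.mem_range.mp hk; omega
      have : t + 1 - k = t - k + 1 := by omega
      rw [this]
    rw [Finset.sum_congr rfl e] at h
    have e2 : t + 1 - (t + 1) = 0 := by omega
    rw [e2, hrrS] at h
    push_cast at h
    linarith [h]
  have hS4 : ∑ k ∈ Finset.range (t + 1), r k * P (t - k + 1)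
      = ((t : ℝ) + 2) * P (t + 2) - r (t + 1) * P 0 := by
    have h := hrec (t + 1)
    rw [Finset.sum_range_succ] at h
    have e : ∀ k ∈ Finset.range (t + 1),
        r k * P (t + 1 - k) = r k * P (t - k + 1) := by
      intro k hk
      have hk' : k ≤ t := by have := Finset.mem_range.mp hk; omega
      have : t + 1 - k = t - k + 1 := by omega
      rw [this]
    rw [Finset.sum_congr rfl e] at h
    have e2 : t + 1 - (t + 1) = 0 := by omega
    rw [e2] at h
    push_cast at h
    linarith [h]
  -- closed form of the certificate sum
  have hsum_eq : ∑ k ∈ Finset.range (t + 1),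
      (r t * (P (t + 1) * P (t - k) - P t * P (t - k + 1)) * (P (t + 1) * rr k - P t * rr (k + 1))
        + (r (t + 1) * P t - r t * P (t + 1)) * (rr k * (P (t + 1) * P (t - k) - P t * P (t - k + 1))))
      = r t * (((t : ℝ) + 2) * P t * (P t * P (t + 2) - P (t + 1) ^ 2))
        - (r (t + 1) * P t - r t * P (t + 1)) * (P t * P (t + 1)) := by
    have expand : ∀ k ∈ Finset.range (t + 1),
        (r t * (P (t + 1) * P (t - k) - P t * P (t - k + 1)) * (P (t + 1) * rr k - P t * rr (k + 1))
          + (r (t + 1) * P t - r t * P (t + 1)) * (rr k * (P (t + 1) * P (t - k) - P t * P (t - k + 1))))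
        = ((r t * P (t + 1) ^ 2 + (r (t + 1) * P t - r t * P (t + 1)) * P (t + 1)) * (rr k * P (t - k))
            - (r t * P (t + 1) * P t) * (r k * P (t - k)))
          + ((r t * P t ^ 2) * (r k * P (t - k + 1))
            - (r t * P t * P (t + 1) + (r (t + 1) * P t - r t * P (t + 1)) * P t) * (rr k * P (t - k + 1))) := by
      intro k hk
      rw [hrrS]
      ring
    rw [Finset.sum_congr rfl expand, Finset.sum_add_distrib, Finset.sum_sub_distrib,
      Finset.sum_sub_distrib, ← Finset.mul_sum, ← Finset.mul_sum, ← Finset.mul_sum,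
      ← Finset.mul_sum, hS1, ← hS2, hS3, hS4]
    ring
  -- the certificate sum is nonnegative
  have final : 0 ≤ r t * (((t : ℝ) + 2) * P t * (P t * P (t + 2) - P (t + 1) ^ 2))
      - (r (t + 1) * P t - r t * P (t + 1)) * (P t * P (t + 1)) := by
    rw [← hsum_eq]
    apply Finset.sum_nonneg
    intro k hk
    have hk' : k ≤ t := by have := Finset.mem_range.mp hk; omega
    have hXk : 0 ≤ P (t + 1) * P (t - k) - P t * P (t - k + 1) := by
      have := hX k (t - k) (by omega)
      nlinarith [this]
    have hbr : 0 ≤ r (t + 1) * rr k - r t * rr (k + 1) := by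
      have := hrk t k hk'
      linarith
    have hid : r t * (P (t + 1) * P (t - k) - P t * P (t - k + 1)) * (P (t + 1) * rr k - P t * rr (k + 1))
        + (r (t + 1) * P t - r t * P (t + 1)) * (rr k * (P (t + 1) * P (t - k) - P t * P (t - k + 1)))
        = (P (t + 1) * P (t - k) - P t * P (t - k + 1)) * (P t * (r (t + 1) * rr k - r t * rr (k + 1))) := by
      ring
    rw [hid]
    exact mul_nonneg hXk (mul_nonneg (hPpos t).le hbr)
  have hspp : 0 ≤ (r (t + 1) * P t - r t * P (t + 1)) * (P t * P (t + 1)) := by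
    have h := hB t
    have := mul_nonneg (hPpos t).le (hPpos (t + 1)).le
    nlinarith [h, this]
  have hpos : 0 < r t * (((t : ℝ) + 2) * P t) := by
    have : (0:ℝ) < (t : ℝ) + 2 := by positivity
    exact mul_pos (hr_pos t) (mul_pos this (hPpos t))
  nlinarith [final, hspp, hpos]

/-- Hansen, log-convex case: with `λ > 0`, nonnegative `(f k)`,
nonnegative `(P n)` with `P 0 > 0` satisfying the Panjer recursion, and
`(k * f k)_{k ≥ 1}` log-convex, the sequence `(P n)` is log-convex if and only
if `λ * f 1 ^ 2 - 2 * f 2 ≤ 0`. -/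
theorem stmt6 (lam : ℝ) (hlam : 0 < lam) (f P : ℕ → ℝ)
    (hf_nonneg : ∀ k : ℕ, 0 ≤ f k)
    (hP_nonneg : ∀ n : ℕ, 0 ≤ P n)
    (hP0 : 0 < P 0)
    (hPrec : ∀ n : ℕ, ((n : ℝ) + 1) * P (n + 1)
      = ∑ k ∈ Finset.range (n + 1), lam * ((k : ℝ) + 1) * f (k + 1) * P (n - k))
    (hkf_logconvex : ∀ k : ℕ, 1 ≤ k →
      (((k : ℝ) + 1) * f (k + 1)) ^ 2 ≤ ((k : ℝ) * f k) * (((k : ℝ) + 2) * f (k + 2))) :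
    (∀ n : ℕ, P (n + 1) ^ 2 ≤ P n * P (n + 2)) ↔ lam * f 1 ^ 2 - 2 * f 2 ≤ 0 := by
  constructor
  · -- forward direction
    intro hlc
    have h0 := hPrec 0
    have h1 := hPrec 1
    rw [Finset.sum_range_one] at h0
    rw [Finset.sum_range_succ, Finset.sum_range_one] at h1
    norm_num at h0 h1
    have hA := hlc 0
    norm_num at hA
    rw [h0] at hA h1
    have key : 2 * (P 0 * P 2) = lam ^ 2 * f 1 ^ 2 * P 0 ^ 2 + 2 * lam * f 2 * P 0 ^ 2 := by
      calc 2 * (P 0 * P 2) = P 0 * (2 * P 2) := by ring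
        _ = P 0 * (lam * f 1 * (lam * f 1 * P 0) + lam * 2 * f 2 * P 0) := by rw [h1]
        _ = lam ^ 2 * f 1 ^ 2 * P 0 ^ 2 + 2 * lam * f 2 * P 0 ^ 2 := by ring
    nlinarith [hA, key, mul_pos hlam (mul_pos hP0 hP0)]
  · -- backward direction
    intro hcond n
    by_cases hf1 : 0 < f 1
    · -- all f (k+1) > 0
      have hf2 : 0 < f 2 := by nlinarith [hcond, hf1, hlam, mul_pos hlam (mul_pos hf1 hf1)]
      have hfpos : ∀ k : ℕ, 0 < f (k + 1) := by
        apply stmt6_strongRec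
        intro k ih
        match k with
        | 0 => exact hf1
        | 1 => exact hf2
        | (m + 2) =>
          have p2 : 0 < f (m + 2) := ih (m + 1) (by omega)
          by_contra hng
          have hz : f (m + 1 + 2) = 0 := le_antisymm (not_lt.mp hng) (hf_nonneg _)
          have h := hkf_logconvex (m + 1) (by omega)
          rw [hz, mul_zero, mul_zero] at h
          have p2' : 0 < f (m + 1 + 1) := p2
          have hc : (0:ℝ) < ((m : ℝ) + 1 + 1) * f (m + 1 + 1) := by
            have : (0:ℝ) < (m : ℝ) + 1 + 1 := by positivity
            exact mul_pos this p2'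
          push_cast at h
          nlinarith [h, hc]
      set r : ℕ → ℝ := fun k => lam * ((k : ℝ) + 1) * f (k + 1) with hr_def
      have hr_pos : ∀ k, 0 < r k := by
        intro k
        have : (0:ℝ) < (k : ℝ) + 1 := by positivity
        exact mul_pos (mul_pos hlam this) (hfpos k)
      have hr01 : r 0 ^ 2 ≤ r 1 := by
        simp only [hr_def]
        push_cast
        nlinarith [hcond, hlam]
      have hrlc : ∀ k : ℕ, r (k + 1) ^ 2 ≤ r k * r (k + 2) := by
        intro k
        have h := hkf_logconvex (k + 1) (by omega)
        push_cast at h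
        simp only [hr_def]
        push_cast
        nlinarith [h, sq_nonneg lam, hlam]
      have hrec : ∀ n : ℕ, ((n : ℝ) + 1) * P (n + 1)
          = ∑ k ∈ Finset.range (n + 1), r k * P (n - k) := by
        intro m
        rw [hPrec m]
      exact stmt6_hard r P hr_pos hr01 hrlc hP0 hrec n
    · -- degenerate case: f 1 = 0 forces everything to vanish
      have hf1z : f 1 = 0 := le_antisymm (not_lt.mp hf1) (hf_nonneg 1)
      have hallz : ∀ k : ℕ, f (k + 1) = 0 := by
        intro k
        induction k with
        | zero => exact hf1z
        | succ m ihm =>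
          have h := hkf_logconvex (m + 1) (by omega)
          rw [ihm] at h
          push_cast at h
          have h2 : (0:ℝ) ≤ (((m : ℝ) + 1 + 1) * f (m + 1 + 1)) ^ 2 := sq_nonneg _
          have h3 : (((m : ℝ) + 1 + 1) * f (m + 1 + 1)) ^ 2 ≤ 0 := by
            calc (((m : ℝ) + 1 + 1) * f (m + 1 + 1)) ^ 2
                ≤ ((m : ℝ) + 1) * 0 * (((m : ℝ) + 1 + 2) * f (m + 1 + 2)) := h
              _ = 0 := by ring
          have h4 : ((m : ℝ) + 1 + 1) * f (m + 1 + 1) = 0 := by nlinarith [h2, h3]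
          have h5 : (0:ℝ) < (m : ℝ) + 1 + 1 := by positivity
          have := mul_eq_zero.mp h4
          rcases this with h | h
          · linarith
          · exact h
      have hPz : ∀ m : ℕ, P (m + 1) = 0 := by
        intro m
        have h := hPrec m
        have hz : ∑ k ∈ Finset.range (m + 1), lam * ((k : ℝ) + 1) * f (k + 1) * P (m - k) = 0 := by
          apply Finset.sum_eq_zero
          intro k hk
          rw [hallz k]
          ring
        rw [hz] at h
        have hm : (0:ℝ) < (m : ℝ) + 1 := by positivity
        have := mul_eq_zero.mp h
        rcases this with h' | h'
        · linarith
        · exact h'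
      rw [hPz n, hPz (n + 1)]
      norm_num
end

section
/- In the polynomial ring ℤ[c_1, c_2, …] with the cycle-index polynomials (b_k)_{k≥0} defined by the falling-factorial recursion, for all integers 1 ≤ m ≤ n the element (n+1)·b_m·b_n − m·b_{m−1}·b_{n+1} lies in ℕ[𝒴], the subsemiring generated by the set 𝒴 = {c_1, c_2, …} ∪ {c_j·c_k − c_{j−1}·c_{k+1} : 0 < j ≤ k} (with c_0 = 1); that is, it can be written as a polynomial in elements of 𝒴 with nonnegative integer coefficients. -/
open MvPolynomial

section Aux

open Finset

variable {c b : ℕ → MvPolynomial ℕ ℤ} {R : Subsemiring (MvPolynomial ℕ ℤ)}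

private lemma dfmf {n k : ℕ} (h : k ≤ n) :
    Nat.descFactorial n k * (n - k).factorial = n.factorial := by
  rw [mul_comm]; exact Nat.factorial_mul_descFactorial h

private lemma form1
    (hbrec : ∀ m : ℕ, b (m + 1)
      = ∑ j ∈ Finset.Icc 1 (m + 1),
          (Nat.descFactorial m (j - 1) : MvPolynomial ℕ ℤ) * c j * b (m + 1 - j))
    (M : ℕ) :
    b (M + 1) = ∑ x ∈ range (M + 1),
      (Nat.descFactorial M x : MvPolynomial ℕ ℤ) * c (x + 1) * b (M - x) := by
  rw [hbrec M, ← Finset.Ico_add_one_right_eq_Icc, Finset.sum_Ico_eq_sum_range]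
  have h2 : M + 1 + 1 - 1 = M + 1 := by omega
  rw [h2]
  refine Finset.sum_congr rfl fun x _ => ?_
  have e1 : 1 + x - 1 = x := by omega
  have e2 : 1 + x = x + 1 := by omega
  have e3 : M + 1 - (x + 1) = M - x := by omega
  rw [e1, e2, e3]

private lemma form3 (hc0 : c 0 = 1)
    (hbrec : ∀ m : ℕ, b (m + 1)
      = ∑ j ∈ Finset.Icc 1 (m + 1),
          (Nat.descFactorial m (j - 1) : MvPolynomial ℕ ℤ) * c j * b (m + 1 - j)) :
    ∀ N : ℕ, ((N : MvPolynomial ℕ ℤ) + 1) * b N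
      = ∑ y ∈ range (N + 1), (Nat.descFactorial N y : MvPolynomial ℕ ℤ) * c y * b (N - y)
  | 0 => by simp [hc0]
  | (M + 1) => by
    rw [Finset.sum_range_succ']
    have h0 : (Nat.descFactorial (M + 1) 0 : MvPolynomial ℕ ℤ) * c 0 * b (M + 1 - 0)
        = b (M + 1) := by simp [hc0]
    rw [h0]
    have hterm : ∀ y, (Nat.descFactorial (M + 1) (y + 1) : MvPolynomial ℕ ℤ) * c (y + 1)
        * b (M + 1 - (y + 1))
        = ((M : MvPolynomial ℕ ℤ) + 1) * ((Nat.descFactorial M y : MvPolynomial ℕ ℤ)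
          * c (y + 1) * b (M - y)) := by
      intro y
      have : M + 1 - (y + 1) = M - y := by omega
      rw [this, Nat.succ_descFactorial_succ]
      push_cast
      ring
    rw [Finset.sum_congr rfl fun y _ => hterm y, ← Finset.mul_sum, ← form1 hbrec M]
    push_cast
    ring

private lemma hbmem (hb0 : b 0 = 1)
    (hbrec : ∀ m : ℕ, b (m + 1)
      = ∑ j ∈ Finset.Icc 1 (m + 1),
          (Nat.descFactorial m (j - 1) : MvPolynomial ℕ ℤ) * c j * b (m + 1 - j))
    (hRc : ∀ j, 1 ≤ j → c j ∈ R) : ∀ k, b k ∈ R := by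
  intro k
  induction k using Nat.strong_induction_on with
  | _ k IH =>
    match k with
    | 0 => rw [hb0]; exact one_mem R
    | (M + 1) =>
      rw [hbrec M]
      refine sum_mem fun j hj => ?_
      simp only [mem_Icc] at hj
      exact mul_mem (mul_mem (natCast_mem R _) (hRc j hj.1)) (IH (M + 1 - j) (by omega))

private lemma mainE (hc0 : c 0 = 1) (hb0 : b 0 = 1)
    (hbrec : ∀ m : ℕ, b (m + 1)
      = ∑ j ∈ Finset.Icc 1 (m + 1),
          (Nat.descFactorial m (j - 1) : MvPolynomial ℕ ℤ) * c j * b (m + 1 - j))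
    (hRc : ∀ j, 1 ≤ j → c j ∈ R)
    (hRD : ∀ j k, 0 < j → j ≤ k → c j * c k - c (j - 1) * c (k + 1) ∈ R) :
    ∀ N m n : ℕ, m + n = N → 1 ≤ m → m ≤ n + 1 →
      ((n : MvPolynomial ℕ ℤ) + 1) * b m * b n
        - (m : MvPolynomial ℕ ℤ) * b (m - 1) * b (n + 1) ∈ R := by
  intro N
  induction N using Nat.strong_induction_on with
  | _ N IH =>
  intro m n hN h1 h2
  rcases Nat.lt_or_ge n m with hnm | hmn
  · -- m = n + 1 : the expression is zero
    have hm : m = n + 1 := by omega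
    subst hm
    have h0 : ((n : MvPolynomial ℕ ℤ) + 1) * b (n + 1) * b n
        - ((n + 1 : ℕ) : MvPolynomial ℕ ℤ) * b (n + 1 - 1) * b (n + 1) = 0 := by
      have : n + 1 - 1 = n := by omega
      rw [this]
      push_cast
      ring
    rw [h0]
    exact zero_mem R
  · -- main case : m ≤ n
    obtain ⟨m', rfl⟩ : ∃ m', m = m' + 1 := ⟨m - 1, by omega⟩
    have hm'n : m' + 1 ≤ n := hmn
    -- the summand
    set t : ℕ → ℕ → MvPolynomial ℕ ℤ := fun x y =>
      ((Nat.descFactorial m' x * Nat.descFactorial n y : ℕ) : MvPolynomial ℕ ℤ) *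
        ((c (x + 1) * c y - c x * c (y + 1)) * (b (m' - x) * b (n - y))) with ht
    set S : Finset (ℕ × ℕ) := range (m' + 1) ×ˢ range (n + 1) with hS
    -- THE KEY IDENTITY
    have hbig : ((n : MvPolynomial ℕ ℤ) + 1) * b (m' + 1) * b n
        - ((m' + 1 : ℕ) : MvPolynomial ℕ ℤ) * b (m' + 1 - 1) * b (n + 1)
        = ∑ p ∈ S, t p.1 p.2 := by
      have e0 : m' + 1 - 1 = m' := by omega
      rw [e0]
      have hb1 := form1 hbrec m'
      have hb4 := form1 hbrec n
      have hb2 := form3 hc0 hbrec n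
      have hb3 := form3 hc0 hbrec m'
      calc ((n : MvPolynomial ℕ ℤ) + 1) * b (m' + 1) * b n
          - ((m' + 1 : ℕ) : MvPolynomial ℕ ℤ) * b m' * b (n + 1)
          = b (m' + 1) * (((n : MvPolynomial ℕ ℤ) + 1) * b n)
            - (((m' : MvPolynomial ℕ ℤ) + 1) * b m') * b (n + 1) := by push_cast; ring
        _ = (∑ x ∈ range (m' + 1),
              (Nat.descFactorial m' x : MvPolynomial ℕ ℤ) * c (x + 1) * b (m' - x)) *
            (∑ y ∈ range (n + 1),
              (Nat.descFactorial n y : MvPolynomial ℕ ℤ) * c y * b (n - y)) -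
            (∑ x ∈ range (m' + 1),
              (Nat.descFactorial m' x : MvPolynomial ℕ ℤ) * c x * b (m' - x)) *
            (∑ y ∈ range (n + 1),
              (Nat.descFactorial n y : MvPolynomial ℕ ℤ) * c (y + 1) * b (n - y)) := by
            rw [← hb1, ← hb2, ← hb3, ← hb4]
        _ = ∑ x ∈ range (m' + 1), ∑ y ∈ range (n + 1), t x y := by
            rw [Finset.sum_mul_sum, Finset.sum_mul_sum, ← Finset.sum_sub_distrib]
            refine Finset.sum_congr rfl fun x _ => ?_
            rw [← Finset.sum_sub_distrib]
            refine Finset.sum_congr rfl fun y _ => ?_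
            rw [ht]
            push_cast
            ring
        _ = ∑ p ∈ S, t p.1 p.2 := by rw [hS, Finset.sum_product']
    rw [hbig]
    -- pair lemma
    have hpair : ∀ x y : ℕ, x < y → y ≤ m' → t x y + t y x ∈ R := by
      intro x y hxy hym'
      have hyn : y ≤ n := by omega
      have hxm' : x ≤ m' := by omega
      set σ : ℕ := (m' - x) + (n - y) with hσ
      set a : ℕ := m' - y with ha
      set w : ℕ := min (m' - x) (n - y) with hw
      have hwl : w ≤ m' - x := min_le_left _ _
      have hwr : w ≤ n - y := min_le_right _ _
      have hw2 : w + w ≤ σ := by omega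
      have haw : a ≤ w := by omega
      set C : ℕ → ℕ := fun z =>
        Nat.descFactorial m' (m' - z) * Nat.descFactorial n (n - (σ - z)) with hC
      set f : ℕ → MvPolynomial ℕ ℤ := fun z =>
        ((C z : ℕ) : MvPolynomial ℕ ℤ) * (b z * b (σ - z)) with hf
      have hstep : ∀ z, a ≤ z → z < w → f (z + 1) - f z ∈ R := by
        intro z hz1 hz2
        have hz3 : z + 1 ≤ m' - x := by omega
        have hz4 : σ - z ≤ n := by omega
        have hz5 : z + 1 ≤ m' := by omega
        have hz6 : z + 1 ≤ σ - z - 1 := by omega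
        set K : ℕ := Nat.descFactorial m' (m' - (z + 1))
          * Nat.descFactorial n (n - (σ - z)) with hK
        have hCz1 : C (z + 1) = K * (σ - z) := by
          rw [hC]
          dsimp only
          have e1 : n - (σ - (z + 1)) = (n - (σ - z)) + 1 := by omega
          rw [e1, Nat.descFactorial_succ]
          have e2 : n - (n - (σ - z)) = σ - z := by omega
          rw [e2, hK]
          ring
        have hCz : C z = K * (z + 1) := by
          rw [hC]
          dsimp only
          have e1 : m' - z = (m' - (z + 1)) + 1 := by omega
          rw [e1, Nat.descFactorial_succ]
          have e2 : m' - (m' - (z + 1)) = z + 1 := by omega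
          rw [e2, hK]
          ring
        have hEmem := IH σ (by omega) (z + 1) (σ - z - 1) (by omega) (by omega) (by omega)
        have e3 : z + 1 - 1 = z := by omega
        have e4 : σ - z - 1 + 1 = σ - z := by omega
        have e5 : ((σ - z - 1 : ℕ) : MvPolynomial ℕ ℤ) + 1
            = ((σ - z : ℕ) : MvPolynomial ℕ ℤ) := by
          rw [show σ - z = (σ - z - 1) + 1 by omega]
          push_cast
          ring
        rw [e3, e4, e5] at hEmem
        have hiden : f (z + 1) - f z
            = ((K : ℕ) : MvPolynomial ℕ ℤ) *
              (((σ - z : ℕ) : MvPolynomial ℕ ℤ) * b (z + 1) * b (σ - z - 1)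
                - ((z + 1 : ℕ) : MvPolynomial ℕ ℤ) * b z * b (σ - z)) := by
          rw [hf]
          dsimp only
          have e6 : σ - (z + 1) = σ - z - 1 := by omega
          rw [e6, hCz1, hCz]
          push_cast
          ring
        rw [hiden]
        exact mul_mem (natCast_mem R K) hEmem
      have htel : f w - f a ∈ R := by
        have hts := Finset.sum_range_sub (fun j => f (a + j)) (w - a)
        have e : a + (w - a) = w := by omega
        rw [e, Nat.add_zero] at hts
        rw [← hts]
        refine sum_mem fun j hj => ?_
        rw [Finset.mem_range] at hj
        exact hstep (a + j) (by omega) (by omega)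
      have hfa : f a = ((Nat.descFactorial m' y * Nat.descFactorial n x : ℕ) :
          MvPolynomial ℕ ℤ) * (b (m' - y) * b (n - x)) := by
        rw [hf, hC]
        dsimp only
        have e1 : m' - a = y := by omega
        have e2 : σ - a = n - x := by omega
        have e3 : n - (n - x) = x := by omega
        rw [e2, e1, e3, ha]
      have hfw : f w = ((Nat.descFactorial m' x * Nat.descFactorial n y : ℕ) :
          MvPolynomial ℕ ℤ) * (b (m' - x) * b (n - y)) := by
        rw [hf, hC]
        dsimp only
        rcases le_total (m' - x) (n - y) with hcase | hcase
        · have ew : w = m' - x := by rw [hw]; exact min_eq_left hcase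
          have e1 : m' - w = x := by omega
          have e2 : σ - w = n - y := by omega
          have e3 : n - (n - y) = y := by omega
          rw [e2, e1, e3, ew]
        · have ew : w = n - y := by rw [hw]; exact min_eq_right hcase
          have e2 : σ - w = m' - x := by omega
          rw [e2, ew]
          have hnat : Nat.descFactorial m' (m' - (n - y)) * Nat.descFactorial n (n - (m' - x))
              = Nat.descFactorial m' x * Nat.descFactorial n y := by
            have hpos : 0 < (m' - x).factorial * (n - y).factorial :=
              Nat.mul_pos (Nat.factorial_pos _) (Nat.factorial_pos _)
            apply Nat.eq_of_mul_eq_mul_right hpos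
            have d1 : Nat.descFactorial m' (m' - (n - y)) * (n - y).factorial
                = m'.factorial := by
              have h := dfmf (show m' - (n - y) ≤ m' from Nat.sub_le _ _)
              rwa [show m' - (m' - (n - y)) = n - y by omega] at h
            have d2 : Nat.descFactorial n (n - (m' - x)) * (m' - x).factorial
                = n.factorial := by
              have h := dfmf (show n - (m' - x) ≤ n from Nat.sub_le _ _)
              rwa [show n - (n - (m' - x)) = m' - x by omega] at h
            have d3 : Nat.descFactorial m' x * (m' - x).factorial = m'.factorial :=
              dfmf (by omega)
            have d4 : Nat.descFactorial n y * (n - y).factorial = n.factorial :=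
              dfmf (by omega)
            calc Nat.descFactorial m' (m' - (n - y)) * Nat.descFactorial n (n - (m' - x))
                * ((m' - x).factorial * (n - y).factorial)
                = (Nat.descFactorial m' (m' - (n - y)) * (n - y).factorial)
                  * (Nat.descFactorial n (n - (m' - x)) * (m' - x).factorial) := by ring
              _ = m'.factorial * n.factorial := by rw [d1, d2]
              _ = (Nat.descFactorial m' x * (m' - x).factorial)
                  * (Nat.descFactorial n y * (n - y).factorial) := by rw [d3, d4]
              _ = Nat.descFactorial m' x * Nat.descFactorial n y
                  * ((m' - x).factorial * (n - y).factorial) := by ring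
          rw [hnat]
          ring
      have hD : c (x + 1) * c y - c x * c (y + 1) ∈ R := by
        have := hRD (x + 1) y (Nat.succ_pos x) (by omega)
        simpa using this
      have hpid : t x y + t y x = (c (x + 1) * c y - c x * c (y + 1)) * (f w - f a) := by
        rw [hfw, hfa, ht]
        push_cast
        ring
      rw [hpid]
      exact mul_mem hD htel
    -- direct terms
    have hterm : ∀ x y : ℕ, x < y → t x y ∈ R := by
      intro x y hxy
      have hD : c (x + 1) * c y - c x * c (y + 1) ∈ R := by
        have := hRD (x + 1) y (Nat.succ_pos x) (by omega)
        simpa using this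
      exact mul_mem (natCast_mem R _)
        (mul_mem hD (mul_mem (hbmem hb0 hbrec hRc _) (hbmem hb0 hbrec hRc _)))
    -- splitting of the sum
    have hsub : ∑ p ∈ S.filter (fun p => ¬ p.1 < p.2), t p.1 p.2
        = ∑ p ∈ S.filter (fun p => p.2 < p.1), t p.1 p.2 := by
      refine (Finset.sum_subset ?_ ?_).symm
      · intro p hp
        simp only [Finset.mem_filter] at hp ⊢
        exact ⟨hp.1, by omega⟩
      · intro p hp hnp
        simp only [Finset.mem_filter] at hp hnp
        have hps : p.1 < m' + 1 ∧ p.2 < n + 1 := by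
          have := hp.1
          rw [hS, Finset.mem_product, Finset.mem_range, Finset.mem_range] at this
          exact this
        have h2' : ¬ p.2 < p.1 := fun h => hnp ⟨hp.1, h⟩
        have hpe : p.1 = p.2 := by
          have := hp.2
          omega
        rw [ht]
        dsimp only
        rw [hpe]
        have : c (p.2 + 1) * c p.2 - c p.2 * c (p.2 + 1) = 0 := by ring
        rw [this, zero_mul, mul_zero]
    have hswap : ∑ p ∈ S.filter (fun p => p.2 < p.1), t p.1 p.2
        = ∑ p ∈ (S.filter (fun p => p.1 < p.2)).filter (fun p => p.2 ≤ m'), t p.2 p.1 := by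
      refine Finset.sum_nbij' (i := Prod.swap) (j := Prod.swap) ?_ ?_ ?_ ?_ ?_
      · intro p hp
        simp only [Finset.mem_filter, hS, Finset.mem_product, Finset.mem_range,
          Prod.fst_swap, Prod.snd_swap] at hp ⊢
        omega
      · intro p hp
        simp only [Finset.mem_filter, hS, Finset.mem_product, Finset.mem_range,
          Prod.fst_swap, Prod.snd_swap] at hp ⊢
        omega
      · intro p _; exact Prod.swap_swap p
      · intro p _; exact Prod.swap_swap p
      · intro p _; rfl
    have hkey : ∑ p ∈ S, t p.1 p.2
        = (∑ p ∈ (S.filter (fun p => p.1 < p.2)).filter (fun p => p.2 ≤ m'),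
            (t p.1 p.2 + t p.2 p.1))
          + ∑ p ∈ (S.filter (fun p => p.1 < p.2)).filter (fun p => ¬ p.2 ≤ m'),
            t p.1 p.2 := by
      rw [Finset.sum_add_distrib]
      rw [← Finset.sum_filter_add_sum_filter_not S (fun p => p.1 < p.2)
        (fun p => t p.1 p.2)]
      rw [← Finset.sum_filter_add_sum_filter_not (S.filter (fun p => p.1 < p.2))
        (fun p => p.2 ≤ m') (fun p => t p.1 p.2)]
      rw [hsub, hswap]
      ring
    rw [hkey]
    refine add_mem (sum_mem fun p hp => ?_) (sum_mem fun p hp => ?_)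
    · simp only [Finset.mem_filter] at hp
      exact hpair p.1 p.2 hp.1.2 hp.2
    · simp only [Finset.mem_filter] at hp
      exact hterm p.1 p.2 hp.1.2

end Aux

/-- in `ℤ[c₁, c₂, …]`, with `(b k)` the cycle-index polynomials given
by the falling-factorial recursion, for all `1 ≤ m ≤ n` the element
`(n+1) bₘ bₙ - m b_{m-1} b_{n+1}` lies in the subsemiring `ℕ[𝒴]` generated by
`𝒴 = {c₁, c₂, …} ∪ {cⱼ c_k - c_{j-1} c_{k+1} : 0 < j ≤ k}` (with `c₀ = 1`). -/
theorem stmt8 (c b : ℕ → MvPolynomial ℕ ℤ)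
    (hc0 : c 0 = 1)
    (hc : ∀ j : ℕ, 1 ≤ j → c j = X j)
    (hb0 : b 0 = 1)
    (hbrec : ∀ m : ℕ, b (m + 1)
      = ∑ j ∈ Finset.Icc 1 (m + 1),
          (Nat.descFactorial m (j - 1) : MvPolynomial ℕ ℤ) * c j * b (m + 1 - j)) :
    ∀ m n : ℕ, 1 ≤ m → m ≤ n →
      ((n : MvPolynomial ℕ ℤ) + 1) * b m * b n - (m : MvPolynomial ℕ ℤ) * b (m - 1) * b (n + 1)
        ∈ Subsemiring.closure
            ({p : MvPolynomial ℕ ℤ | ∃ j : ℕ, 1 ≤ j ∧ p = c j} ∪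
             {p : MvPolynomial ℕ ℤ | ∃ j k : ℕ, 0 < j ∧ j ≤ k ∧
                p = c j * c k - c (j - 1) * c (k + 1)}) := by
  intro m n h1 h2
  have hRc : ∀ j, 1 ≤ j → c j ∈ Subsemiring.closure
      ({p : MvPolynomial ℕ ℤ | ∃ j : ℕ, 1 ≤ j ∧ p = c j} ∪
       {p : MvPolynomial ℕ ℤ | ∃ j k : ℕ, 0 < j ∧ j ≤ k ∧
          p = c j * c k - c (j - 1) * c (k + 1)}) := by
    intro j hj
    exact Subsemiring.subset_closure (Or.inl ⟨j, hj, rfl⟩)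
  have hRD : ∀ j k, 0 < j → j ≤ k → c j * c k - c (j - 1) * c (k + 1) ∈ Subsemiring.closure
      ({p : MvPolynomial ℕ ℤ | ∃ j : ℕ, 1 ≤ j ∧ p = c j} ∪
       {p : MvPolynomial ℕ ℤ | ∃ j k : ℕ, 0 < j ∧ j ≤ k ∧
          p = c j * c k - c (j - 1) * c (k + 1)}) := by
    intro j k hj hk
    exact Subsemiring.subset_closure (Or.inr ⟨j, k, hj, hk, rfl⟩)
  exact mainE hc0 hb0 hbrec hRc hRD (m + n) m n rfl h1 (by omega)
end

section
/- Let R be a commutative ring, let (c_k)_{k≥0} be elements of R with c_0 = 1, and define (b_k)_{k≥0} by b_0 = 1 and b_{m+1} = Σ_{j=1}^{m+1} (m)_{j−1}·c_j·b_{m+1−j}. Then for every m ≥ 0 the companion identity (m+1)·b_m = Σ_{j=1}^{m+1} (m)_{j−1}·c_{j−1}·b_{m+1−j} holds. -/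
/-- in a commutative ring `R`, if `c 0 = 1` and `(b k)` satisfies the
falling-factorial recursion `b (m+1) = ∑_{j=1}^{m+1} (m)_{j-1} cⱼ b_{m+1-j}` with
`b 0 = 1`, then the companion identity
`(m+1) bₘ = ∑_{j=1}^{m+1} (m)_{j-1} c_{j-1} b_{m+1-j}` holds for every `m ≥ 0`. -/
theorem stmt10 {R : Type*} [CommRing R] (c b : ℕ → R)
    (hc0 : c 0 = 1)
    (hb0 : b 0 = 1)
    (hbrec : ∀ m : ℕ, b (m + 1)
      = ∑ j ∈ Finset.Icc 1 (m + 1),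
          (Nat.descFactorial m (j - 1) : R) * c j * b (m + 1 - j)) :
    ∀ m : ℕ, ((m : R) + 1) * b m
      = ∑ j ∈ Finset.Icc 1 (m + 1),
          (Nat.descFactorial m (j - 1) : R) * c (j - 1) * b (m + 1 - j) := by
  intro m
  cases m with
  | zero => simp [hb0, hc0]
  | succ n =>
    have h1 : Finset.Icc 1 (n + 2) = insert 1 (Finset.Icc 2 (n + 2)) := by
      ext x; simp; omega
    rw [h1, Finset.sum_insert (by simp)]
    have h2 : ∑ j ∈ Finset.Icc 2 (n + 2),
        (Nat.descFactorial (n + 1) (j - 1) : R) * c (j - 1) * b (n + 1 + 1 - j)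
        = ∑ i ∈ Finset.Icc 1 (n + 1),
        ((n : R) + 1) * ((Nat.descFactorial n (i - 1) : R) * c i * b (n + 1 - i)) := by
      have hmap : Finset.Icc 2 (n + 2)
          = (Finset.Icc 1 (n + 1)).map (addRightEmbedding 1) := by
        rw [Finset.map_add_right_Icc]
      rw [hmap, Finset.sum_map]
      apply Finset.sum_congr rfl
      intro i hi
      simp only [Finset.mem_Icc] at hi
      obtain ⟨k, rfl⟩ : ∃ k, i = k + 1 := ⟨i - 1, by omega⟩
      simp only [addRightEmbedding_apply]
      have e1 : k + 1 + 1 - 1 = k + 1 := rfl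
      have e2 : n + 1 + 1 - (k + 1 + 1) = n + 1 - (k + 1) := by omega
      rw [e1, e2, Nat.succ_descFactorial_succ]
      push_cast
      ring_nf
    rw [h2, ← Finset.mul_sum, ← hbrec n]
    simp only [Nat.add_sub_cancel, Nat.sub_self, Nat.descFactorial_zero,
      Nat.cast_one, hc0]
    push_cast
    ring_nf
end

section
/- Let R be a commutative ring, let (x_k)_{k≥0} and (y_k)_{k≥0} be sequences in R, and let D_n = Σ_{k=0}^n x_k·y_{n−k}. Then for all integers 1 ≤ m ≤ n: D_m·D_n − D_{m−1}·D_{n+1} = x_0·y_0·x_m·y_n + y_0·Σ_{k=0}^{n−m−1} x_m·x_{k+1}·y_{n−1−k} + y_0·Σ_{k=0}^{m−1} y_k·(x_m·x_{n−k} − x_{n+1}·x_{m−k−1}) + Σ_{k=0}^{m−1} Σ_{ℓ=0}^{n−m} x_k·x_ℓ·(y_{m−k}·y_{n−ℓ} − y_{m−k−1}·y_{n+1−ℓ}) + Σ_{k=0}^{m−1} Σ_{ℓ=0}^{k} (x_k·x_{n−m+1+ℓ} − x_ℓ·x_{n−m+1+k})·(y_{m−k}·y_{m−1−ℓ} − y_{m−1−k}·y_{m−ℓ}).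 -/
private lemma sq_tri {M : Type*} [AddCommMonoid M] (F : ℕ → ℕ → M) (m : ℕ)
    (hd : ∀ k, F k k = 0) :
    ∑ i ∈ Finset.range m, ∑ j ∈ Finset.range m, F i j
      = ∑ k ∈ Finset.range m, ∑ l ∈ Finset.range (k + 1), (F k l + F l k) := by
  induction m with
  | zero => simp
  | succ m ih =>
    have h1 : ∀ i, ∑ j ∈ Finset.range (m + 1), F i j
        = (∑ j ∈ Finset.range m, F i j) + F i m := fun i => Finset.sum_range_succ _ _
    rw [Finset.sum_range_succ]
    simp_rw [h1]
    rw [Finset.sum_add_distrib, ih, Finset.sum_range_succ (fun k =>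
      ∑ l ∈ Finset.range (k + 1), (F k l + F l k)), Finset.sum_range_succ
      (fun l => (F m l + F l m)), hd m, Finset.sum_add_distrib]
    abel

/-- in a commutative ring, with `D n = ∑_{k=0}^n x_k y_{n-k}` the Cauchy
convolution of `(x k)` and `(y k)`, for all `1 ≤ m ≤ n` the identity of
Lemma (Schirmacher / Matsui) expressing `Dₘ Dₙ - D_{m-1} D_{n+1}` holds. -/
theorem stmt13 {R : Type*} [CommRing R] (x y : ℕ → R) (D : ℕ → R)
    (hD : ∀ n : ℕ, D n = ∑ k ∈ Finset.range (n + 1), x k * y (n - k)) :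
    ∀ m n : ℕ, 1 ≤ m → m ≤ n →
      D m * D n - D (m - 1) * D (n + 1)
        = x 0 * y 0 * x m * y n
          + y 0 * ∑ k ∈ Finset.range (n - m), x m * x (k + 1) * y (n - 1 - k)
          + y 0 * ∑ k ∈ Finset.range m, y k * (x m * x (n - k) - x (n + 1) * x (m - k - 1))
          + ∑ k ∈ Finset.range m, ∑ l ∈ Finset.range (n - m + 1),
              x k * x l * (y (m - k) * y (n - l) - y (m - k - 1) * y (n + 1 - l))
          + ∑ k ∈ Finset.range m, ∑ l ∈ Finset.range (k + 1),
              (x k * x (n - m + 1 + l) - x l * x (n - m + 1 + k))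
                * (y (m - k) * y (m - 1 - l) - y (m - 1 - k) * y (m - l)) := by
  intro m n hm hn
  have hm1 : m - 1 + 1 = m := by omega
  have hr : Finset.range (n + 1) = Finset.range ((n - m + 1) + m) := by
    congr 1; omega
  -- expanded forms of D
  have hDm : D m = (∑ i ∈ Finset.range m, x i * y (m - i)) + x m * y 0 := by
    rw [hD, Finset.sum_range_succ, Nat.sub_self]
  have hDn1 : D (n + 1) = (∑ j ∈ Finset.range (n + 1), x j * y (n + 1 - j))
      + x (n + 1) * y 0 := by
    rw [hD, Finset.sum_range_succ, Nat.sub_self]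
  have hDm1 : D (m - 1) = ∑ i ∈ Finset.range m, x i * y (m - 1 - i) := by
    rw [hD, hm1]
  have hDn : D n = ∑ j ∈ Finset.range (n + 1), x j * y (n - j) := hD n
  -- abbreviations
  set P : R := ∑ i ∈ Finset.range m, ∑ j ∈ Finset.range (n + 1),
      x i * x j * (y (m - i) * y (n - j) - y (m - i - 1) * y (n + 1 - j)) with hPdef
  set Q : R := ∑ j ∈ Finset.range (n + 1), x m * x j * y (n - j) with hQdef
  set Rg : R := ∑ i ∈ Finset.range m, x (n + 1) * x i * y (m - 1 - i) with hRdef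
  set F : ℕ → ℕ → R := fun i l =>
      x i * x (n - m + 1 + l) * (y (m - i) * y (m - 1 - l) - y (m - i - 1) * y (m - l))
      with hFdef
  -- Step 1: LHS = P + y0 * Q - y0 * Rg
  have key : D m * D n - D (m - 1) * D (n + 1) = P + y 0 * Q - y 0 * Rg := by
    rw [hDm, hDn, hDm1, hDn1, add_mul, mul_add, Finset.sum_mul_sum, Finset.sum_mul_sum]
    have e1 : (∑ i ∈ Finset.range m, ∑ j ∈ Finset.range (n + 1),
          (x i * y (m - i)) * (x j * y (n - j)))
        - (∑ i ∈ Finset.range m, ∑ j ∈ Finset.range (n + 1),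
          (x i * y (m - 1 - i)) * (x j * y (n + 1 - j))) = P := by
      rw [hPdef, ← Finset.sum_sub_distrib]
      refine Finset.sum_congr rfl fun i hi => ?_
      rw [← Finset.sum_sub_distrib]
      refine Finset.sum_congr rfl fun j hj => ?_
      have h : m - 1 - i = m - i - 1 := by omega
      rw [h]; ring
    have e2 : (x m * y 0) * (∑ j ∈ Finset.range (n + 1), x j * y (n - j)) = y 0 * Q := by
      rw [hQdef, Finset.mul_sum, Finset.mul_sum]
      exact Finset.sum_congr rfl fun j _ => by ring
    have e3 : (∑ i ∈ Finset.range m, x i * y (m - 1 - i)) * (x (n + 1) * y 0)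
        = y 0 * Rg := by
      rw [hRdef, Finset.sum_mul, Finset.mul_sum]
      exact Finset.sum_congr rfl fun i _ => by ring
    linear_combination e1 + e2 - e3
  -- Step 2: split Q
  have hQ : Q = x m * x 0 * y n
      + (∑ k ∈ Finset.range (n - m), x m * x (k + 1) * y (n - 1 - k))
      + ∑ k ∈ Finset.range m, y k * (x m * x (n - k)) := by
    rw [hQdef, hr, Finset.sum_range_add, Finset.sum_range_succ']
    have c1 : (∑ k ∈ Finset.range (n - m), x m * x (k + 1) * y (n - (k + 1)))
        = ∑ k ∈ Finset.range (n - m), x m * x (k + 1) * y (n - 1 - k) := by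
      refine Finset.sum_congr rfl fun k hk => ?_
      have h : n - (k + 1) = n - 1 - k := by omega
      rw [h]
    have c2 : (∑ l ∈ Finset.range m, x m * x (n - m + 1 + l) * y (n - (n - m + 1 + l)))
        = ∑ k ∈ Finset.range m, y k * (x m * x (n - k)) := by
      rw [← Finset.sum_range_reflect (fun k => y k * (x m * x (n - k))) m]
      refine Finset.sum_congr rfl fun l hl => ?_
      rw [Finset.mem_range] at hl
      have h1 : n - (n - m + 1 + l) = m - 1 - l := by omega
      have h2 : n - (m - 1 - l) = n - m + 1 + l := by omega
      rw [h1, h2]; ring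
    rw [c1, c2, Nat.sub_zero]; ring
  -- Step 3: reindex Rg
  have hR : Rg = ∑ k ∈ Finset.range m, y k * (x (n + 1) * x (m - k - 1)) := by
    rw [hRdef, ← Finset.sum_range_reflect (fun k => y k * (x (n + 1) * x (m - k - 1))) m]
    refine Finset.sum_congr rfl fun i hi => ?_
    rw [Finset.mem_range] at hi
    have h : m - (m - 1 - i) - 1 = i := by omega
    rw [h]; ring
  -- Step 4: split P
  have hP : P = (∑ k ∈ Finset.range m, ∑ l ∈ Finset.range (n - m + 1),
        x k * x l * (y (m - k) * y (n - l) - y (m - k - 1) * y (n + 1 - l)))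
      + ∑ i ∈ Finset.range m, ∑ l ∈ Finset.range m, F i l := by
    have hinner : ∀ i : ℕ, (∑ j ∈ Finset.range (n + 1),
          x i * x j * (y (m - i) * y (n - j) - y (m - i - 1) * y (n + 1 - j)))
        = (∑ j ∈ Finset.range (n - m + 1),
            x i * x j * (y (m - i) * y (n - j) - y (m - i - 1) * y (n + 1 - j)))
          + ∑ l ∈ Finset.range m, x i * x (n - m + 1 + l) *
              (y (m - i) * y (n - (n - m + 1 + l)) - y (m - i - 1) * y (n + 1 - (n - m + 1 + l))) := by
      intro i
      rw [hr, Finset.sum_range_add]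
    rw [hPdef]
    calc (∑ i ∈ Finset.range m, ∑ j ∈ Finset.range (n + 1),
          x i * x j * (y (m - i) * y (n - j) - y (m - i - 1) * y (n + 1 - j)))
        = ∑ i ∈ Finset.range m, ((∑ j ∈ Finset.range (n - m + 1),
            x i * x j * (y (m - i) * y (n - j) - y (m - i - 1) * y (n + 1 - j)))
          + ∑ l ∈ Finset.range m, x i * x (n - m + 1 + l) *
              (y (m - i) * y (n - (n - m + 1 + l)) - y (m - i - 1) * y (n + 1 - (n - m + 1 + l)))) :=
          Finset.sum_congr rfl fun i _ => hinner i
      _ = _ := by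
          rw [Finset.sum_add_distrib]
          congr 1
          refine Finset.sum_congr rfl fun i _ => Finset.sum_congr rfl fun l hl => ?_
          rw [Finset.mem_range] at hl
          have h1 : n - (n - m + 1 + l) = m - 1 - l := by omega
          have h2 : n + 1 - (n - m + 1 + l) = m - l := by omega
          rw [hFdef, h1, h2]
  -- Step 5: square to triangle
  have hd : ∀ k, F k k = 0 := by
    intro k
    rw [hFdef]
    have h : m - 1 - k = m - k - 1 := by omega
    simp only
    rw [h]; ring
  have hS : (∑ i ∈ Finset.range m, ∑ l ∈ Finset.range m, F i l)
      = ∑ k ∈ Finset.range m, ∑ l ∈ Finset.range (k + 1),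
          (x k * x (n - m + 1 + l) - x l * x (n - m + 1 + k))
            * (y (m - k) * y (m - 1 - l) - y (m - 1 - k) * y (m - l)) := by
    rw [sq_tri F m hd]
    refine Finset.sum_congr rfl fun k _ => Finset.sum_congr rfl fun l _ => ?_
    rw [hFdef]
    simp only
    have h1 : m - k - 1 = m - 1 - k := by omega
    have h2 : m - l - 1 = m - 1 - l := by omega
    rw [h1, h2]; ring
  -- Step 6: split the third RHS term
  have hT3 : (∑ k ∈ Finset.range m, y k * (x m * x (n - k) - x (n + 1) * x (m - k - 1)))
      = (∑ k ∈ Finset.range m, y k * (x m * x (n - k)))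
        - ∑ k ∈ Finset.range m, y k * (x (n + 1) * x (m - k - 1)) := by
    rw [← Finset.sum_sub_distrib]
    exact Finset.sum_congr rfl fun k _ => by ring
  rw [key, hP, hS, hQ, hR, hT3]
  ring
end

section
/- Work in the polynomial ring over ℤ in indeterminates x_0, x_1, … and y_0, y_1, …, and let D_n = Σ_{k=0}^n x_k·y_{n−k}. Let 𝒢 = {x_0, x_1, …} ∪ {x_m·x_n − x_{m−1}·x_{n+1} : 1 ≤ m ≤ n} and ℱ = {y_0, y_1, …} ∪ {y_m·y_n − y_{m−1}·y_{n+1} : 1 ≤ m ≤ n}. Then for all 1 ≤ m ≤ n, D_m·D_n − D_{m−1}·D_{n+1} lies in ℕ[𝒢 ∪ ℱ], i.e., it can be written as a polynomial in elements of 𝒢 ∪ ℱ with nonnegative integer coefficients. -/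
open MvPolynomial

open Finset

noncomputable abbrev Pol := MvPolynomial (ℕ ⊕ ℕ) ℤ

noncomputable def xf (i : ℤ) : Pol := if 0 ≤ i then X (Sum.inl i.toNat) else 0
noncomputable def yf (i : ℤ) : Pol := if 0 ≤ i then X (Sum.inr i.toNat) else 0

lemma xf_nat (k : ℕ) : xf (k : ℤ) = X (Sum.inl k) := by simp [xf]
lemma yf_nat (k : ℕ) : yf (k : ℤ) = X (Sum.inr k) := by simp [yf]
lemma xf_neg {i : ℤ} (h : i < 0) : xf i = 0 := by
  simp only [xf]; rw [if_neg (by omega)]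
lemma yf_neg {i : ℤ} (h : i < 0) : yf i = 0 := by
  simp only [yf]; rw [if_neg (by omega)]

noncomputable def uT (m n : ℕ) (p : ℕ × ℕ) : Pol :=
  xf p.1 * xf p.2 * (yf ((m : ℤ) - p.1) * yf ((n : ℤ) - p.2))
noncomputable def zT (m n : ℕ) (p : ℕ × ℕ) : Pol :=
  xf p.1 * xf p.2 * (yf ((m : ℤ) - 1 - p.1) * yf ((n : ℤ) + 1 - p.2))
noncomputable def vT (m n : ℕ) (p : ℕ × ℕ) : Pol :=
  xf p.1 * xf p.2 * (yf ((n : ℤ) + 1 - p.1) * yf ((m : ℤ) - 1 - p.2))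
noncomputable def wT (m n : ℕ) (p : ℕ × ℕ) : Pol :=
  xf p.1 * xf p.2 * (yf ((n : ℤ) - p.1) * yf ((m : ℤ) - p.2))

lemma swp {M : Type*} [AddCommMonoid M] (N : ℕ) (F : ℕ × ℕ → M) (P Q : ℕ × ℕ → Prop)
    [DecidablePred P] [DecidablePred Q] (h : ∀ k l : ℕ, P (k, l) ↔ Q (l, k)) :
    ∑ p ∈ ((range N ×ˢ range N).filter P), F p
      = ∑ p ∈ ((range N ×ˢ range N).filter Q), F p.swap := by
  refine Finset.sum_nbij' (fun p => p.swap) (fun p => p.swap) ?_ ?_ ?_ ?_ ?_ <;>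
    simp only [mem_filter, mem_product, mem_range, Prod.swap_swap, Prod.fst_swap,
      Prod.snd_swap, and_imp]
  · intro p h1 h2 h3
    exact ⟨⟨h2, h1⟩, (h p.1 p.2).1 (by simpa using h3)⟩
  · intro p h1 h2 h3
    refine ⟨⟨h2, h1⟩, ?_⟩
    have := (h p.2 p.1).2 (by simpa using h3)
    exact this
  · intro p _ _ _; trivial
  · intro p _ _ _; trivial
  · intro p _ _ _; trivial

/-- The key Cauchy–Binet style identity. -/
lemma key (m n : ℕ) (hm : 1 ≤ m) (hmn : m ≤ n) :
    (∑ k ∈ range (n + 3), xf k * yf ((m : ℤ) - k)) *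
      (∑ k ∈ range (n + 3), xf k * yf ((n : ℤ) - k)) -
    (∑ k ∈ range (n + 3), xf k * yf ((m : ℤ) - 1 - k)) *
      (∑ k ∈ range (n + 3), xf k * yf ((n : ℤ) + 1 - k))
    = ∑ p ∈ ((range (n + 3) ×ˢ range (n + 3)).filter fun p => p.1 < p.2),
        (xf p.1 * xf ((p.2 : ℤ) - 1) - xf ((p.1 : ℤ) - 1) * xf p.2) *
        (yf ((m : ℤ) - p.1) * yf ((n : ℤ) + 1 - p.2) -
         yf ((n : ℤ) + 1 - p.1) * yf ((m : ℤ) - p.2)) := by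
  set N := n + 3 with hN
  set T := range N ×ˢ range N with hT
  set FLE := T.filter (fun p => p.1 ≤ p.2) with hFLE
  set FLT := T.filter (fun p => p.1 < p.2) with hFLT
  set F1 := T.filter (fun p => p.1 + 1 < p.2) with hF1
  set FD := T.filter (fun p => p.2 = p.1 + 1) with hFD
  -- E1
  have E1 : (∑ k ∈ range N, xf k * yf ((m : ℤ) - k)) *
      (∑ k ∈ range N, xf k * yf ((n : ℤ) - k))
      = (∑ p ∈ FLE, uT m n p) + ∑ p ∈ FLT, wT m n p := by
    rw [Finset.sum_mul_sum]
    have e1 : (∑ p ∈ T, (xf p.1 * yf ((m : ℤ) - p.1)) * (xf p.2 * yf ((n : ℤ) - p.2)))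
        = ∑ k ∈ range N, ∑ l ∈ range N, (xf k * yf ((m : ℤ) - k)) * (xf l * yf ((n : ℤ) - l)) :=
      Finset.sum_product' (s := range N) (t := range N) (f := fun (k l : ℕ) => (xf (k:ℤ) * yf ((m : ℤ) - k)) * (xf (l:ℤ) * yf ((n : ℤ) - l)))
    rw [← e1, ← Finset.sum_filter_add_sum_filter_not T (fun p => p.1 ≤ p.2)]
    congr 1
    · exact Finset.sum_congr rfl fun p _ => by simp only [uT]; ring
    · rw [swp N _ (fun p => ¬ p.1 ≤ p.2) (fun p => p.1 < p.2) (fun k l => by omega)]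
      exact Finset.sum_congr rfl fun p _ => by
        simp only [wT, Prod.fst_swap, Prod.snd_swap]; ring
  -- E2
  have E2 : (∑ k ∈ range N, xf k * yf ((m : ℤ) - 1 - k)) *
      (∑ k ∈ range N, xf k * yf ((n : ℤ) + 1 - k))
      = (∑ p ∈ FLT, zT m n p) + ∑ p ∈ FLE, vT m n p := by
    rw [Finset.sum_mul_sum]
    have e1 : (∑ p ∈ T, (xf p.1 * yf ((m : ℤ) - 1 - p.1)) * (xf p.2 * yf ((n : ℤ) + 1 - p.2)))
        = ∑ k ∈ range N, ∑ l ∈ range N,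
            (xf k * yf ((m : ℤ) - 1 - k)) * (xf l * yf ((n : ℤ) + 1 - l)) :=
      Finset.sum_product' (s := range N) (t := range N)
        (f := fun (k l : ℕ) => (xf (k:ℤ) * yf ((m : ℤ) - 1 - k)) * (xf (l:ℤ) * yf ((n : ℤ) + 1 - l)))
    rw [← e1, ← Finset.sum_filter_add_sum_filter_not T (fun p => p.1 < p.2)]
    congr 1
    · exact Finset.sum_congr rfl fun p _ => by simp only [zT]; ring
    · rw [swp N _ (fun p => ¬ p.1 < p.2) (fun p => p.1 ≤ p.2) (fun k l => by omega)]
      exact Finset.sum_congr rfl fun p _ => by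
        simp only [vT, Prod.fst_swap, Prod.snd_swap]; ring
  have memFLT : ∀ p : ℕ × ℕ, p ∈ FLT → p.1 < p.2 ∧ p.1 < N ∧ p.2 < N := by
    intro p hp
    rw [hFLT, Finset.mem_filter, hT, Finset.mem_product] at hp
    simp only [Finset.mem_range] at hp
    exact ⟨hp.2, hp.1.1, hp.1.2⟩
  have mkFLT : ∀ p : ℕ × ℕ, p.1 < p.2 → p.1 < N → p.2 < N → p ∈ FLT := by
    intro p h1 h2 h3
    rw [hFLT, Finset.mem_filter, hT, Finset.mem_product]
    simp only [Finset.mem_range]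
    exact ⟨⟨h2, h3⟩, h1⟩
  have mkFLE : ∀ p : ℕ × ℕ, p.1 ≤ p.2 → p.1 < N → p.2 < N → p ∈ FLE := by
    intro p h1 h2 h3
    rw [hFLE, Finset.mem_filter, hT, Finset.mem_product]
    simp only [Finset.mem_range]
    exact ⟨⟨h2, h3⟩, h1⟩
  have memFLE : ∀ p : ℕ × ℕ, p ∈ FLE → p.1 ≤ p.2 ∧ p.1 < N ∧ p.2 < N := by
    intro p hp
    rw [hFLE, Finset.mem_filter, hT, Finset.mem_product] at hp
    simp only [Finset.mem_range] at hp
    exact ⟨hp.2, hp.1.1, hp.1.2⟩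
  have mkF1 : ∀ p : ℕ × ℕ, p.1 + 1 < p.2 → p.1 < N → p.2 < N → p ∈ F1 := by
    intro p h1 h2 h3
    rw [hF1, Finset.mem_filter, hT, Finset.mem_product]
    simp only [Finset.mem_range]
    exact ⟨⟨h2, h3⟩, h1⟩
  have memF1 : ∀ p : ℕ × ℕ, p ∈ F1 → p.1 + 1 < p.2 ∧ p.1 < N ∧ p.2 < N := by
    intro p hp
    rw [hF1, Finset.mem_filter, hT, Finset.mem_product] at hp
    simp only [Finset.mem_range] at hp
    exact ⟨hp.2, hp.1.1, hp.1.2⟩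
  -- the auxiliary restricted index set for the column shift
  set E := T.filter (fun p => p.1 ≤ p.2 ∧ p.2 + 1 < N) with hE
  have memE : ∀ p : ℕ × ℕ, p ∈ E → (p.1 ≤ p.2 ∧ p.2 + 1 < N) ∧ p.1 < N ∧ p.2 < N := by
    intro p hp
    rw [hE, Finset.mem_filter, hT, Finset.mem_product] at hp
    simp only [Finset.mem_range] at hp
    exact ⟨hp.2, hp.1.1, hp.1.2⟩
  have mkE : ∀ p : ℕ × ℕ, p.1 ≤ p.2 → p.2 + 1 < N → p.1 < N → p ∈ E := by
    intro p h1 h2 h3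
    rw [hE, Finset.mem_filter, hT, Finset.mem_product]
    simp only [Finset.mem_range]
    exact ⟨⟨h3, by omega⟩, h1, h2⟩
  have colshift : ∀ G : ℕ × ℕ → Pol,
      (∑ p ∈ FLT, G p) = ∑ p ∈ E, G (p.1, p.2 + 1) := by
    intro G
    refine Finset.sum_nbij' (fun p => (p.1, p.2 - 1)) (fun p => (p.1, p.2 + 1))
      ?_ ?_ ?_ ?_ ?_
    · rintro ⟨a, b⟩ hp
      obtain ⟨h1, h2, h3⟩ := memFLT _ hp
      dsimp only at h1 h2 h3 ⊢
      exact mkE (a, b - 1) (by dsimp only; omega) (by dsimp only; omega)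
        (by dsimp only; omega)
    · rintro ⟨a, b⟩ hp
      obtain ⟨⟨h1, h2⟩, h3, h4⟩ := memE _ hp
      dsimp only at h1 h2 h3 h4 ⊢
      exact mkFLT (a, b + 1) (by dsimp only; omega) (by dsimp only; omega)
        (by dsimp only; omega)
    · rintro ⟨a, b⟩ hp
      obtain ⟨h1, h2, h3⟩ := memFLT _ hp
      have hb : b - 1 + 1 = b := by omega
      show ((a, b - 1 + 1) : ℕ × ℕ) = (a, b)
      rw [hb]
    · rintro ⟨a, b⟩ hp
      show ((a, b + 1 - 1) : ℕ × ℕ) = (a, b)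
      rfl
    · rintro ⟨a, b⟩ hp
      obtain ⟨h1, h2, h3⟩ := memFLT _ hp
      have hb : b - 1 + 1 = b := by omega
      show G (a, b) = G (a, b - 1 + 1)
      rw [hb]
  -- the auxiliary restricted index set for the row shift
  set E2s := T.filter (fun p => 1 ≤ p.1 ∧ p.1 < p.2) with hE2s
  have memE2s : ∀ p : ℕ × ℕ, p ∈ E2s → (1 ≤ p.1 ∧ p.1 < p.2) ∧ p.1 < N ∧ p.2 < N := by
    intro p hp
    rw [hE2s, Finset.mem_filter, hT, Finset.mem_product] at hp
    simp only [Finset.mem_range] at hp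
    exact ⟨hp.2, hp.1.1, hp.1.2⟩
  have mkE2s : ∀ p : ℕ × ℕ, 1 ≤ p.1 → p.1 < p.2 → p.2 < N → p ∈ E2s := by
    intro p h1 h2 h3
    rw [hE2s, Finset.mem_filter, hT, Finset.mem_product]
    simp only [Finset.mem_range]
    exact ⟨⟨by omega, h3⟩, h1, h2⟩
  have rowshift : ∀ G : ℕ × ℕ → Pol,
      (∑ p ∈ E2s, G p) = ∑ p ∈ F1, G (p.1 + 1, p.2) := by
    intro G
    refine Finset.sum_nbij' (fun p => (p.1 - 1, p.2)) (fun p => (p.1 + 1, p.2))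
      ?_ ?_ ?_ ?_ ?_
    · rintro ⟨a, b⟩ hp
      obtain ⟨⟨h1, h2⟩, h3, h4⟩ := memE2s _ hp
      dsimp only at h1 h2 h3 h4 ⊢
      exact mkF1 (a - 1, b) (by dsimp only; omega) (by dsimp only; omega)
        (by dsimp only; omega)
    · rintro ⟨a, b⟩ hp
      obtain ⟨h1, h2, h3⟩ := memF1 _ hp
      dsimp only at h1 h2 h3 ⊢
      exact mkE2s (a + 1, b) (by dsimp only; omega) (by dsimp only; omega)
        (by dsimp only; omega)
    · rintro ⟨a, b⟩ hp
      obtain ⟨⟨h1, _⟩, _, _⟩ := memE2s _ hp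
      have ha : a - 1 + 1 = a := by omega
      show ((a - 1 + 1, b) : ℕ × ℕ) = (a, b)
      rw [ha]
    · rintro ⟨a, b⟩ hp
      show ((a + 1 - 1, b) : ℕ × ℕ) = (a, b)
      rfl
    · rintro ⟨a, b⟩ hp
      obtain ⟨⟨h1, _⟩, _, _⟩ := memE2s _ hp
      have ha : a - 1 + 1 = a := by omega
      show G (a, b) = G (a - 1 + 1, b)
      rw [ha]
  -- restriction lemma: terms with p.1 = 0 vanish for the t3/t4 shapes
  have restrict : ∀ G : ℕ × ℕ → Pol, (∀ p : ℕ × ℕ, p.1 = 0 → G p = 0) →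
      (∑ p ∈ FLT, G p) = ∑ p ∈ E2s, G p := by
    intro G hG
    refine (Finset.sum_subset ?_ ?_).symm
    · intro p hp
      obtain ⟨⟨h1, h2⟩, h3, h4⟩ := memE2s _ hp
      exact mkFLT _ h2 h3 h4
    · intro p hp hnp
      obtain ⟨h1, h2, h3⟩ := memFLT _ hp
      have : p.1 = 0 := by
        by_contra hc
        exact hnp (mkE2s p (by omega) h1 h3)
      exact hG p this
  have E3 : (∑ p ∈ FLT,
        (xf p.1 * xf ((p.2 : ℤ) - 1) - xf ((p.1 : ℤ) - 1) * xf p.2) *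
        (yf ((m : ℤ) - p.1) * yf ((n : ℤ) + 1 - p.2) -
         yf ((n : ℤ) + 1 - p.1) * yf ((m : ℤ) - p.2)))
      = ((∑ p ∈ FLE, uT m n p) - ∑ p ∈ FLE, vT m n p)
        - (∑ p ∈ F1, zT m n p) + ∑ p ∈ F1, wT m n p := by
    have expand : (∑ p ∈ FLT,
        (xf p.1 * xf ((p.2 : ℤ) - 1) - xf ((p.1 : ℤ) - 1) * xf p.2) *
        (yf ((m : ℤ) - p.1) * yf ((n : ℤ) + 1 - p.2) -
         yf ((n : ℤ) + 1 - p.1) * yf ((m : ℤ) - p.2)))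
        = ((∑ p ∈ FLT, xf p.1 * xf ((p.2 : ℤ) - 1) * (yf ((m : ℤ) - p.1) * yf ((n : ℤ) + 1 - p.2)))
          - ∑ p ∈ FLT, xf p.1 * xf ((p.2 : ℤ) - 1) * (yf ((n : ℤ) + 1 - p.1) * yf ((m : ℤ) - p.2)))
          - (∑ p ∈ FLT, xf ((p.1 : ℤ) - 1) * xf p.2 * (yf ((m : ℤ) - p.1) * yf ((n : ℤ) + 1 - p.2)))
          + ∑ p ∈ FLT, xf ((p.1 : ℤ) - 1) * xf p.2 * (yf ((n : ℤ) + 1 - p.1) * yf ((m : ℤ) - p.2)) := by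
      rw [← Finset.sum_sub_distrib, ← Finset.sum_sub_distrib, ← Finset.sum_add_distrib]
      exact Finset.sum_congr rfl fun p _ => by ring
    rw [expand]
    -- t1
    have ht1 : (∑ p ∈ FLT, xf p.1 * xf ((p.2 : ℤ) - 1) * (yf ((m : ℤ) - p.1) * yf ((n : ℤ) + 1 - p.2)))
        = ∑ p ∈ FLE, uT m n p := by
      rw [colshift (fun p => xf p.1 * xf ((p.2 : ℤ) - 1) * (yf ((m : ℤ) - p.1) * yf ((n : ℤ) + 1 - p.2)))]
      have step : ∀ p : ℕ × ℕ, p ∈ E →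
          xf p.1 * xf (((p.2 + 1 : ℕ) : ℤ) - 1) *
            (yf ((m : ℤ) - p.1) * yf ((n : ℤ) + 1 - ((p.2 + 1 : ℕ) : ℤ)))
          = uT m n p := by
        intro p _
        simp only [uT]
        rw [show (((p.2 + 1 : ℕ)) : ℤ) - 1 = (p.2 : ℤ) by push_cast; ring,
          show (n : ℤ) + 1 - ((p.2 + 1 : ℕ) : ℤ) = (n : ℤ) - p.2 by push_cast; ring]
      rw [Finset.sum_congr rfl step]
      refine Finset.sum_subset ?_ ?_
      · intro p hp
        obtain ⟨⟨h1, h2⟩, h3, h4⟩ := memE p hp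
        exact mkFLE p h1 h3 h4
      · intro p hp hnp
        obtain ⟨h1, h2, h3⟩ := memFLE p hp
        have hb : ¬ (p.2 + 1 < N) := fun hc => hnp (mkE p h1 hc h2)
        simp only [uT]
        rw [yf_neg (show ((n : ℤ) - p.2) < 0 by omega)]
        ring
    -- t2
    have ht2 : (∑ p ∈ FLT, xf p.1 * xf ((p.2 : ℤ) - 1) * (yf ((n : ℤ) + 1 - p.1) * yf ((m : ℤ) - p.2)))
        = ∑ p ∈ FLE, vT m n p := by
      rw [colshift (fun p => xf p.1 * xf ((p.2 : ℤ) - 1) * (yf ((n : ℤ) + 1 - p.1) * yf ((m : ℤ) - p.2)))]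
      have step : ∀ p : ℕ × ℕ, p ∈ E →
          xf p.1 * xf (((p.2 + 1 : ℕ) : ℤ) - 1) *
            (yf ((n : ℤ) + 1 - p.1) * yf ((m : ℤ) - ((p.2 + 1 : ℕ) : ℤ)))
          = vT m n p := by
        intro p _
        simp only [vT]
        rw [show (((p.2 + 1 : ℕ)) : ℤ) - 1 = (p.2 : ℤ) by push_cast; ring,
          show (m : ℤ) - ((p.2 + 1 : ℕ) : ℤ) = (m : ℤ) - 1 - p.2 by push_cast; ring]
      rw [Finset.sum_congr rfl step]
      refine Finset.sum_subset ?_ ?_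
      · intro p hp
        obtain ⟨⟨h1, h2⟩, h3, h4⟩ := memE p hp
        exact mkFLE p h1 h3 h4
      · intro p hp hnp
        obtain ⟨h1, h2, h3⟩ := memFLE p hp
        have hb : ¬ (p.2 + 1 < N) := fun hc => hnp (mkE p h1 hc h2)
        simp only [vT]
        rw [yf_neg (show ((m : ℤ) - 1 - p.2) < 0 by omega)]
        ring
    -- t3
    have ht3 : (∑ p ∈ FLT, xf ((p.1 : ℤ) - 1) * xf p.2 * (yf ((m : ℤ) - p.1) * yf ((n : ℤ) + 1 - p.2)))
        = ∑ p ∈ F1, zT m n p := by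
      rw [restrict _ (fun p hp => by
        rw [hp, xf_neg (show ((0 : ℕ) : ℤ) - 1 < 0 by norm_num)]
        ring)]
      rw [rowshift (fun p => xf ((p.1 : ℤ) - 1) * xf p.2 * (yf ((m : ℤ) - p.1) * yf ((n : ℤ) + 1 - p.2)))]
      refine Finset.sum_congr rfl fun p hp => ?_
      simp only [zT]
      rw [show (((p.1 + 1 : ℕ)) : ℤ) - 1 = (p.1 : ℤ) by push_cast; ring,
        show (m : ℤ) - ((p.1 + 1 : ℕ) : ℤ) = (m : ℤ) - 1 - p.1 by push_cast; ring]
    -- t4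
    have ht4 : (∑ p ∈ FLT, xf ((p.1 : ℤ) - 1) * xf p.2 * (yf ((n : ℤ) + 1 - p.1) * yf ((m : ℤ) - p.2)))
        = ∑ p ∈ F1, wT m n p := by
      rw [restrict _ (fun p hp => by
        rw [hp, xf_neg (show ((0 : ℕ) : ℤ) - 1 < 0 by norm_num)]
        ring)]
      rw [rowshift (fun p => xf ((p.1 : ℤ) - 1) * xf p.2 * (yf ((n : ℤ) + 1 - p.1) * yf ((m : ℤ) - p.2)))]
      refine Finset.sum_congr rfl fun p hp => ?_
      simp only [wT]
      rw [show (((p.1 + 1 : ℕ)) : ℤ) - 1 = (p.1 : ℤ) by push_cast; ring,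
        show (n : ℤ) + 1 - ((p.1 + 1 : ℕ) : ℤ) = (n : ℤ) - p.1 by push_cast; ring]
    rw [ht1, ht2, ht3, ht4]
  -- splitting off the diagonal
  have split : ∀ G : ℕ × ℕ → Pol,
      (∑ p ∈ FLT, G p) = (∑ p ∈ F1, G p) + ∑ p ∈ FD, G p := by
    intro G
    rw [← Finset.sum_filter_add_sum_filter_not FLT (fun p => p.1 + 1 < p.2)]
    congr 1
    · rw [hFLT, Finset.filter_filter, hF1]
      exact Finset.sum_congr (Finset.filter_congr fun p _ => by constructor <;> intro <;> omega) fun _ _ => rfl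
    · rw [hFLT, Finset.filter_filter, hFD]
      exact Finset.sum_congr (Finset.filter_congr fun p _ => by constructor <;> intro <;> omega) fun _ _ => rfl
  have E4 : (∑ p ∈ FLT, wT m n p) = (∑ p ∈ F1, wT m n p) + ∑ p ∈ FD, wT m n p := split _
  have E5 : (∑ p ∈ FLT, zT m n p) = (∑ p ∈ F1, zT m n p) + ∑ p ∈ FD, zT m n p := split _
  have E6 : (∑ p ∈ FD, wT m n p) = ∑ p ∈ FD, zT m n p := by
    refine Finset.sum_congr rfl fun p hp => ?_
    have hd : p.2 = p.1 + 1 := by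
      rw [hFD, Finset.mem_filter] at hp
      exact hp.2
    simp only [wT, zT, hd]
    rw [show ((m : ℤ) - ((p.1 + 1 : ℕ) : ℤ)) = (m : ℤ) - 1 - p.1 by push_cast; ring,
      show ((n : ℤ) + 1 - ((p.1 + 1 : ℕ) : ℤ)) = (n : ℤ) - p.1 by push_cast; ring]
    ring
  linear_combination E1 - E2 - E3 + E4 - E5 + E6

lemma tele {R : Type*} [CommRing R] (y : ℕ → R) (S : Set R)
    (hg : ∀ i j, 1 ≤ i → i ≤ j → y i * y j - y (i - 1) * y (j + 1) ∈ Subsemiring.closure S) :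
    ∀ t i j : ℕ, t < i → i ≤ j →
      y i * y j - y (i - t - 1) * y (j + t + 1) ∈ Subsemiring.closure S := by
  intro t
  induction t with
  | zero => intro i j h1 h2; simpa using hg i j h1 h2
  | succ t ih =>
    intro i j h1 h2
    have e1 : i - (t + 1) - 1 = (i - t - 1) - 1 := by omega
    have e2 : j + (t + 1) + 1 = (j + t + 1) + 1 := by omega
    rw [e1, e2]
    have keyeq : y i * y j - y (i - t - 1 - 1) * y (j + t + 1 + 1)
        = (y i * y j - y (i - t - 1) * y (j + t + 1))
          + (y (i - t - 1) * y (j + t + 1) - y (i - t - 1 - 1) * y (j + t + 1 + 1)) := by ring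
    rw [keyeq]
    exact add_mem (ih i j (by omega) h2) (hg (i - t - 1) (j + t + 1) (by omega) (by omega))

lemma bal {R : Type*} [CommRing R] (y : ℕ → R) (S : Set R)
    (hg : ∀ i j, 1 ≤ i → i ≤ j → y i * y j - y (i - 1) * y (j + 1) ∈ Subsemiring.closure S)
    (a b a' b' : ℕ) (hs : a + b = a' + b') (h1 : a' < a) (h2 : a' < b) :
    y a * y b - y a' * y b' ∈ Subsemiring.closure S := by
  rcases le_total a b with h | h
  · have := tele y S hg (a - a' - 1) a b (by omega) h
    have e1 : a - (a - a' - 1) - 1 = a' := by omega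
    have e2 : b + (a - a' - 1) + 1 = b' := by omega
    rwa [e1, e2] at this
  · have := tele y S hg (b - a' - 1) b a (by omega) h
    have e1 : b - (b - a' - 1) - 1 = a' := by omega
    have e2 : a + (b - a' - 1) + 1 = b' := by omega
    rw [e1, e2] at this
    rwa [mul_comm (y b) (y a)] at this


/-- in `ℤ[x₀, x₁, …, y₀, y₁, …]`, with `D n = ∑_{k=0}^n x_k y_{n-k}`,
for all `1 ≤ m ≤ n` the element `Dₘ Dₙ - D_{m-1} D_{n+1}` lies in `ℕ[𝒢 ∪ ℱ]`, where
`𝒢 = {x₀, x₁, …} ∪ {xₘ xₙ - x_{m-1} x_{n+1} : 1 ≤ m ≤ n}` and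
`ℱ = {y₀, y₁, …} ∪ {yₘ yₙ - y_{m-1} y_{n+1} : 1 ≤ m ≤ n}`. -/
theorem stmt14 (x y : ℕ → MvPolynomial (ℕ ⊕ ℕ) ℤ)
    (hx : ∀ i : ℕ, x i = X (Sum.inl i))
    (hy : ∀ i : ℕ, y i = X (Sum.inr i))
    (D : ℕ → MvPolynomial (ℕ ⊕ ℕ) ℤ)
    (hD : ∀ n : ℕ, D n = ∑ k ∈ Finset.range (n + 1), x k * y (n - k)) :
    ∀ m n : ℕ, 1 ≤ m → m ≤ n →
      D m * D n - D (m - 1) * D (n + 1)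
        ∈ Subsemiring.closure
            (({p : MvPolynomial (ℕ ⊕ ℕ) ℤ | ∃ i : ℕ, p = x i} ∪
              {p : MvPolynomial (ℕ ⊕ ℕ) ℤ | ∃ i j : ℕ, 1 ≤ i ∧ i ≤ j ∧
                 p = x i * x j - x (i - 1) * x (j + 1)}) ∪
             ({p : MvPolynomial (ℕ ⊕ ℕ) ℤ | ∃ i : ℕ, p = y i} ∪
              {p : MvPolynomial (ℕ ⊕ ℕ) ℤ | ∃ i j : ℕ, 1 ≤ i ∧ i ≤ j ∧
                 p = y i * y j - y (i - 1) * y (j + 1)})) := by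
  intro m n hm hmn
  set S := (({p : MvPolynomial (ℕ ⊕ ℕ) ℤ | ∃ i : ℕ, p = x i} ∪
              {p : MvPolynomial (ℕ ⊕ ℕ) ℤ | ∃ i j : ℕ, 1 ≤ i ∧ i ≤ j ∧
                 p = x i * x j - x (i - 1) * x (j + 1)}) ∪
             ({p : MvPolynomial (ℕ ⊕ ℕ) ℤ | ∃ i : ℕ, p = y i} ∪
              {p : MvPolynomial (ℕ ⊕ ℕ) ℤ | ∃ i j : ℕ, 1 ≤ i ∧ i ≤ j ∧
                 p = y i * y j - y (i - 1) * y (j + 1)})) with hS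
  have hxmem : ∀ i : ℕ, X (Sum.inl i) ∈ Subsemiring.closure S :=
    fun i => Subsemiring.subset_closure (Or.inl (Or.inl ⟨i, (hx i).symm⟩))
  have hymem : ∀ i : ℕ, X (Sum.inr i) ∈ Subsemiring.closure S :=
    fun i => Subsemiring.subset_closure (Or.inr (Or.inl ⟨i, (hy i).symm⟩))
  have hxgen : ∀ i j : ℕ, 1 ≤ i → i ≤ j →
      (fun i => X (Sum.inl i) : ℕ → MvPolynomial (ℕ ⊕ ℕ) ℤ) i *
        (fun i => X (Sum.inl i) : ℕ → MvPolynomial (ℕ ⊕ ℕ) ℤ) j -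
      (fun i => X (Sum.inl i) : ℕ → MvPolynomial (ℕ ⊕ ℕ) ℤ) (i - 1) *
        (fun i => X (Sum.inl i) : ℕ → MvPolynomial (ℕ ⊕ ℕ) ℤ) (j + 1)
        ∈ Subsemiring.closure S := by
    intro i j h1 h2
    refine Subsemiring.subset_closure (Or.inl (Or.inr ⟨i, j, h1, h2, ?_⟩))
    simp only [hx]
  have hygen : ∀ i j : ℕ, 1 ≤ i → i ≤ j →
      (fun i => X (Sum.inr i) : ℕ → MvPolynomial (ℕ ⊕ ℕ) ℤ) i *
        (fun i => X (Sum.inr i) : ℕ → MvPolynomial (ℕ ⊕ ℕ) ℤ) j -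
      (fun i => X (Sum.inr i) : ℕ → MvPolynomial (ℕ ⊕ ℕ) ℤ) (i - 1) *
        (fun i => X (Sum.inr i) : ℕ → MvPolynomial (ℕ ⊕ ℕ) ℤ) (j + 1)
        ∈ Subsemiring.closure S := by
    intro i j h1 h2
    refine Subsemiring.subset_closure (Or.inr (Or.inr ⟨i, j, h1, h2, ?_⟩))
    simp only [hy]
  -- D as an extended sum
  have hDm : ∀ p : ℕ, p < n + 3 →
      D p = ∑ k ∈ Finset.range (n + 3), xf k * yf ((p : ℤ) - k) := by
    intro p hp
    rw [hD p]
    have ext : ∑ k ∈ Finset.range (n + 3), xf k * yf ((p : ℤ) - k)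
        = ∑ k ∈ Finset.range (p + 1), xf k * yf ((p : ℤ) - k) := by
      refine (Finset.sum_subset ?_ ?_).symm
      · intro k hk
        simp only [Finset.mem_range] at *
        omega
      · intro k hk hnk
        simp only [Finset.mem_range] at hk hnk
        rw [yf_neg (show (p : ℤ) - k < 0 by omega)]
        ring
    rw [ext]
    refine Finset.sum_congr rfl fun k hk => ?_
    simp only [Finset.mem_range] at hk
    rw [show ((p : ℤ) - k) = ((p - k : ℕ) : ℤ) by omega, xf_nat, yf_nat, hx, hy]
  have hD1 : D m = ∑ k ∈ Finset.range (n + 3), xf k * yf ((m : ℤ) - k) :=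
    hDm m (by omega)
  have hD2 : D n = ∑ k ∈ Finset.range (n + 3), xf k * yf ((n : ℤ) - k) :=
    hDm n (by omega)
  have hD3 : D (m - 1) = ∑ k ∈ Finset.range (n + 3), xf k * yf ((m : ℤ) - 1 - k) := by
    rw [hDm (m - 1) (by omega)]
    refine Finset.sum_congr rfl fun k hk => ?_
    rw [show (((m - 1 : ℕ)) : ℤ) - k = (m : ℤ) - 1 - k by omega]
  have hD4 : D (n + 1) = ∑ k ∈ Finset.range (n + 3), xf k * yf ((n : ℤ) + 1 - k) := by
    rw [hDm (n + 1) (by omega)]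
    refine Finset.sum_congr rfl fun k hk => ?_
    rw [show (((n + 1 : ℕ)) : ℤ) - k = (n : ℤ) + 1 - k by omega]
  rw [hD1, hD2, hD3, hD4, key m n hm hmn]
  refine sum_mem ?_
  intro p hp
  have hkl : p.1 < p.2 := (Finset.mem_filter.mp hp).2
  refine mul_mem ?_ ?_
  · -- x-factor
    rcases Nat.eq_zero_or_pos p.1 with h0 | h1
    · rw [h0]
      rw [show (((0 : ℕ)) : ℤ) = 0 from rfl, xf_neg (show (0 : ℤ) - 1 < 0 by norm_num)]
      rw [show ((p.2 : ℤ) - 1) = ((p.2 - 1 : ℕ) : ℤ) by omega, xf_nat, xf_nat,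
        show ((0 : ℤ)) = ((0 : ℕ) : ℤ) from rfl, xf_nat]
      rw [zero_mul, sub_zero]
      exact mul_mem (hxmem 0) (hxmem (p.2 - 1))
    · rw [show ((p.2 : ℤ) - 1) = ((p.2 - 1 : ℕ) : ℤ) by omega,
        show ((p.1 : ℤ) - 1) = ((p.1 - 1 : ℕ) : ℤ) by omega, xf_nat, xf_nat, xf_nat, xf_nat]
      have := hxgen p.1 (p.2 - 1) h1 (by omega)
      simp only at this
      rwa [show p.2 - 1 + 1 = p.2 by omega] at this
  · -- y-factor
    rcases le_or_gt p.2 (n + 1) with hl | hl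
    · rcases lt_or_ge m p.1 with hk | hk
      · rw [yf_neg (show (m : ℤ) - p.1 < 0 by omega),
          yf_neg (show (m : ℤ) - p.2 < 0 by omega)]
        rw [zero_mul, mul_zero, sub_zero]
        exact zero_mem _
      · rcases lt_or_ge m p.2 with hl2 | hl2
        · rw [yf_neg (show (m : ℤ) - p.2 < 0 by omega), mul_zero, sub_zero]
          rw [show ((m : ℤ) - p.1) = ((m - p.1 : ℕ) : ℤ) by omega,
            show ((n : ℤ) + 1 - p.2) = ((n + 1 - p.2 : ℕ) : ℤ) by omega, yf_nat, yf_nat]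
          exact mul_mem (hymem _) (hymem _)
        · -- all indices nonnegative: telescoping
          rw [show ((m : ℤ) - p.1) = ((m - p.1 : ℕ) : ℤ) by omega,
            show ((n : ℤ) + 1 - p.2) = ((n + 1 - p.2 : ℕ) : ℤ) by omega,
            show ((n : ℤ) + 1 - p.1) = ((n + 1 - p.1 : ℕ) : ℤ) by omega,
            show ((m : ℤ) - p.2) = ((m - p.2 : ℕ) : ℤ) by omega,
            yf_nat, yf_nat, yf_nat, yf_nat]
          have := bal (fun i => X (Sum.inr i)) S hygen
            (m - p.1) (n + 1 - p.2) (m - p.2) (n + 1 - p.1)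
            (by omega) (by omega) (by omega)
          rwa [mul_comm (X (Sum.inr (m - p.2)) : MvPolynomial (ℕ ⊕ ℕ) ℤ)
            (X (Sum.inr (n + 1 - p.1)))] at this
    · rw [yf_neg (show (n : ℤ) + 1 - p.2 < 0 by omega),
        yf_neg (show (m : ℤ) - p.2 < 0 by omega), mul_zero, mul_zero, sub_zero]
      exact zero_mem _
end

section
/- For i = 1, …, w let (c_{i,k})_{k≥1} be nonnegative log-convex real sequences, set C_j = Σ_{i=1}^w c_{i,j}, define (A_k)_{k≥0} by A_0 = 1 and (n+1)·A_{n+1} = Σ_{j=1}^{n+1} C_j·A_{n+1−j}, and set B_k = k!·A_k. Then the inequalities m·B_{m−1}·B_{n+1} ≥ (n+1)·B_m·B_n hold for all 1 ≤ m ≤ n if and only if Σ_{i=1}^w c_{i,2} ≥ (Σ_{i=1}^w c_{i,1})²; moreover these inequalities are equivalent to A_{m−1}·A_{n+1} ≥ A_m·A_n for all 1 ≤ m ≤ n. -/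
open Finset

/-- Auxiliary: the core log-convexity result for the sequence `A` defined by the
exponential-formula recursion, with coefficients `C` nonnegative, log-convex and
satisfying `C 1 ^ 2 ≤ C 2`. -/
private lemma stmt15_cross (C A : ℕ → ℝ)
    (hC0 : ∀ j : ℕ, 1 ≤ j → 0 ≤ C j)
    (hCl : ∀ k : ℕ, 1 ≤ k → C (k + 1) ^ 2 ≤ C k * C (k + 2))
    (hE : C 1 ^ 2 ≤ C 2)
    (hA0 : A 0 = 1)
    (hrec : ∀ n : ℕ, ((n : ℝ) + 1) * A (n + 1)
      = ∑ k ∈ range (n + 1), C (k + 1) * A (n - k)) :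
    ∀ m n : ℕ, 1 ≤ m → m ≤ n → A m * A n ≤ A (m - 1) * A (n + 1) := by
  have hA1 : A 1 = C 1 := by
    have h := hrec 0
    rw [Finset.sum_range_one] at h
    norm_num [hA0] at h
    linarith
  by_cases hC1 : C 1 = 0
  · -- degenerate case: all C vanish, hence A n = 0 for n ≥ 1
    have hCz : ∀ k : ℕ, C (k + 1) = 0 := by
      intro k
      induction k with
      | zero => exact hC1
      | succ k ih =>
        have h := hCl (k + 1) (by omega)
        rw [ih] at h
        have h0 := sq_nonneg (C (k + 2))
        have : C (k + 2) ^ 2 = 0 := by linarith [h, h0]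
        exact pow_eq_zero_iff (by norm_num) |>.mp this
    have hAz : ∀ n : ℕ, A (n + 1) = 0 := by
      intro n
      have h := hrec n
      rw [Finset.sum_eq_zero (fun k _ => by rw [hCz k]; ring)] at h
      have hp : ((n : ℝ) + 1) ≠ 0 := by positivity
      rcases mul_eq_zero.mp h with h' | h'
      · exact absurd h' hp
      · exact h'
    intro m n hm hmn
    obtain ⟨m', rfl⟩ : ∃ m', m = m' + 1 := ⟨m - 1, by omega⟩
    obtain ⟨n', rfl⟩ : ∃ n', n = n' + 1 := ⟨n - 1, by omega⟩
    rw [hAz m', hAz (n' + 1)]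
    simp
  · -- main case: C 1 > 0
    have hC1p : 0 < C 1 := lt_of_le_of_ne (hC0 1 le_rfl) (Ne.symm hC1)
    have hCpos : ∀ k : ℕ, 0 < C (k + 1) := by
      intro k
      induction k using Nat.strong_induction_on with
      | _ k IH =>
        match k with
        | 0 => exact hC1p
        | 1 => nlinarith [hE, hC1p]
        | (k + 2) =>
          have h1 := IH k (by omega)
          have h2 := IH (k + 1) (by omega)
          have h3 := hCl (k + 1) (by omega)
          nlinarith [h1, h2, h3]
    have hApos : ∀ n : ℕ, 0 < A n := by
      intro n
      induction n using Nat.strong_induction_on with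
      | _ n IH =>
        match n with
        | 0 => rw [hA0]; norm_num
        | (m + 1) =>
          have h := hrec m
          have hpos : 0 < ∑ k ∈ range (m + 1), C (k + 1) * A (m - k) := by
            apply Finset.sum_pos'
            · intro k _
              exact mul_nonneg (hCpos k).le (IH (m - k) (by omega)).le
            · exact ⟨0, Finset.mem_range.mpr (by omega), by
                simpa using mul_pos (hCpos 0) (IH m (by omega))⟩
          have hm1 : (0 : ℝ) < (m : ℝ) + 1 := by positivity
          nlinarith [h, hpos, hm1]
    -- ratio-chain lemmas for C
    have RC : ∀ i j : ℕ, 1 ≤ i → i ≤ j → C (i + 1) * C j ≤ C i * C (j + 1) := by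
      intro i j hi hij
      induction j, hij using Nat.le_induction with
      | base => rw [mul_comm]
      | succ j hij IH =>
        have h2 := hCl j (by omega)
        have hj : 0 < C j := by
          have := hCpos (j - 1)
          rwa [Nat.sub_add_cancel (by omega)] at this
        have hCi : 0 ≤ C i := hC0 i (by omega)
        have hCj1 : 0 ≤ C (j + 1) := hC0 (j + 1) (by omega)
        nlinarith [mul_le_mul_of_nonneg_right IH hCj1,
          mul_le_mul_of_nonneg_left h2 hCi, hj]
    have E0 : ∀ j : ℕ, 1 ≤ j → C 1 * C j ≤ C (j + 1) := by
      intro j hj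
      induction j, hj using Nat.le_induction with
      | base => nlinarith [hE]
      | succ j hj IH =>
        have h2 := hCl j (by omega)
        have hjp : 0 < C j := by
          have := hCpos (j - 1)
          rwa [Nat.sub_add_cancel (by omega)] at this
        have hCj1 : 0 ≤ C (j + 1) := hC0 (j + 1) (by omega)
        nlinarith [mul_le_mul_of_nonneg_right IH hCj1, hjp, h2]
    have PROD : ∀ i : ℕ, 1 ≤ i → ∀ j, i ≤ j → C i * C j ≤ C 1 * C (i + j - 1) := by
      intro i hi
      induction i, hi using Nat.le_induction with
      | base =>
        intro j hj
        rw [show 1 + j - 1 = j from by omega]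
      | succ i hi IH =>
        intro j hj
        calc C (i + 1) * C j ≤ C i * C (j + 1) := RC i j hi (by omega)
        _ ≤ C 1 * C (i + (j + 1) - 1) := IH (j + 1) (by omega)
        _ = C 1 * C (i + 1 + j - 1) := by rw [show i + (j + 1) - 1 = i + 1 + j - 1 from by omega]
    -- W : A n ≤ C n for n ≥ 1
    have W : ∀ n : ℕ, A (n + 1) ≤ C (n + 1) := by
      intro n
      induction n using Nat.strong_induction_on with
      | _ n IH =>
        have h := hrec n
        have hb : ∀ k ∈ range (n + 1), C (k + 1) * A (n - k) ≤ C (n + 1) := by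
          intro k hk
          rw [Finset.mem_range] at hk
          rcases Nat.lt_or_ge k n with hkn | hkn
          · have hWk : A (n - k) ≤ C (n - k) := by
              rw [show n - k = n - k - 1 + 1 from by omega]
              exact IH (n - k - 1) (by omega)
            have hP : C (k + 1) * C (n - k) ≤ C 1 * C n := by
              rcases le_total (k + 1) (n - k) with hle | hle
              · have := PROD (k + 1) (by omega) (n - k) hle
                rwa [show k + 1 + (n - k) - 1 = n from by omega] at this
              · have := PROD (n - k) (by omega) (k + 1) hle
                rw [show n - k + (k + 1) - 1 = n from by omega] at this
                linarith [this, mul_comm (C (n - k)) (C (k + 1))]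
            calc C (k + 1) * A (n - k) ≤ C (k + 1) * C (n - k) :=
                  mul_le_mul_of_nonneg_left hWk (hCpos k).le
            _ ≤ C 1 * C n := hP
            _ ≤ C (n + 1) := E0 n (by omega)
          · have hk' : k = n := by omega
            subst hk'
            rw [Nat.sub_self, hA0, mul_one]
        have hsum : ∑ k ∈ range (n + 1), C (k + 1) * A (n - k) ≤ ((n : ℝ) + 1) * C (n + 1) := by
          calc ∑ k ∈ range (n + 1), C (k + 1) * A (n - k)
              ≤ (range (n + 1)).card • C (n + 1) := Finset.sum_le_card_nsmul _ _ _ hb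
          _ = ((n : ℝ) + 1) * C (n + 1) := by
              rw [Finset.card_range, nsmul_eq_mul]; push_cast; ring
        have hm1 : (0 : ℝ) < (n : ℝ) + 1 := by positivity
        nlinarith [h, hsum, hm1]
    -- Q : C (m+1) * A (m+1) ≤ C (m+2) * A m
    have Q : ∀ m : ℕ, C (m + 1) * A (m + 1) ≤ C (m + 2) * A m := by
      intro m
      have h := hrec m
      have h2 : ((m : ℝ) + 1) * (C (m + 1) * A (m + 1))
          = ∑ k ∈ range (m + 1), C (m + 1) * (C (k + 1) * A (m - k)) := by
        rw [← Finset.mul_sum, ← h]; ring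
      have hsum2 : ∑ k ∈ range m, C (k + 1) * A (m - (k + 1)) = (m : ℝ) * A m := by
        cases m with
        | zero => simp
        | succ m' =>
          calc ∑ k ∈ range (m' + 1), C (k + 1) * A (m' + 1 - (k + 1))
              = ∑ k ∈ range (m' + 1), C (k + 1) * A (m' - k) := by
                apply Finset.sum_congr rfl
                intro k _
                rw [Nat.succ_sub_succ]
          _ = ((m' : ℝ) + 1) * A (m' + 1) := (hrec m').symm
          _ = ((m' + 1 : ℕ) : ℝ) * A (m' + 1) := by push_cast; ring
      have hbound : ∑ k ∈ range (m + 1), C (m + 1) * (C (k + 1) * A (m - k))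
          ≤ ((m : ℝ) + 1) * (C (m + 2) * A m) := by
        rw [Finset.sum_range_succ']
        have hf0 : C (m + 1) * (C (0 + 1) * A (m - 0)) ≤ C (m + 2) * A m := by
          simp only [Nat.sub_zero, Nat.zero_add]
          have hE1 := E0 (m + 1) (by omega)
          nlinarith [mul_le_mul_of_nonneg_right hE1 (hApos m).le]
        have hfk : ∀ k ∈ range m,
            C (m + 1) * (C (k + 1 + 1) * A (m - (k + 1))) ≤ C (m + 2) * (C (k + 1) * A (m - (k + 1))) := by
          intro k hk
          have hrc := RC (k + 1) (m + 1) (by omega) (by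
            rw [Finset.mem_range] at hk; omega)
          nlinarith [mul_le_mul_of_nonneg_right hrc (hApos (m - (k + 1))).le]
        calc ∑ k ∈ range m, C (m + 1) * (C (k + 1 + 1) * A (m - (k + 1)))
              + C (m + 1) * (C (0 + 1) * A (m - 0))
            ≤ ∑ k ∈ range m, C (m + 2) * (C (k + 1) * A (m - (k + 1))) + C (m + 2) * A m :=
              add_le_add (Finset.sum_le_sum hfk) hf0
        _ = C (m + 2) * ((m : ℝ) * A m) + C (m + 2) * A m := by
              rw [← Finset.mul_sum]
              congr 1
              rw [hsum2]
        _ = ((m : ℝ) + 1) * (C (m + 2) * A m) := by ring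
      have h3 : ((m : ℝ) + 1) * (C (m + 1) * A (m + 1)) ≤ ((m : ℝ) + 1) * (C (m + 2) * A m) :=
        le_trans (le_of_eq h2) hbound
      exact le_of_mul_le_mul_left h3 (by positivity)
    -- sum identities
    have S3 : ∀ n : ℕ, ∑ t ∈ range n, C (n - t) * A t = (n : ℝ) * A n := by
      intro n
      cases n with
      | zero => simp
      | succ m =>
        calc ∑ t ∈ range (m + 1), C (m + 1 - t) * A t
            = ∑ t ∈ range (m + 1), C (t + 1) * A (m - t) := by
              rw [← Finset.sum_range_reflect (fun t => C (t + 1) * A (m - t)) (m + 1)]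
              apply Finset.sum_congr rfl
              intro j hj
              rw [Finset.mem_range, Nat.lt_succ_iff] at hj
              congr 2
              · omega
              · omega
        _ = ((m : ℝ) + 1) * A (m + 1) := (hrec m).symm
        _ = ((m + 1 : ℕ) : ℝ) * A (m + 1) := by push_cast; ring
    have S4 : ∀ n : ℕ, ∑ t ∈ range n, C (n - t) * A (t + 1) = ((n : ℝ) + 1) * A (n + 1) - C (n + 1) := by
      intro n
      cases n with
      | zero => norm_num [hA1]
      | succ m =>
        have h := hrec (m + 1)
        rw [Finset.sum_range_succ, Nat.sub_self, hA0, mul_one] at h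
        calc ∑ t ∈ range (m + 1), C (m + 1 - t) * A (t + 1)
            = ∑ t ∈ range (m + 1), C (t + 1) * A (m + 1 - t) := by
              rw [← Finset.sum_range_reflect (fun t => C (t + 1) * A (m + 1 - t)) (m + 1)]
              apply Finset.sum_congr rfl
              intro j hj
              rw [Finset.mem_range, Nat.lt_succ_iff] at hj
              congr 2
              · omega
              · omega
        _ = (((m + 1 : ℕ) : ℝ) + 1) * A (m + 2) - C (m + 2) := by
              push_cast at h ⊢
              linarith [h]
    have S1 : ∀ n : ℕ, ∑ t ∈ range n, C (n + 1 - t) * A t = ((n : ℝ) + 1) * A (n + 1) - C 1 * A n := by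
      intro n
      have h := S3 (n + 1)
      rw [Finset.sum_range_succ, show n + 1 - n = 1 from by omega] at h
      push_cast at h ⊢
      have hcongr : ∑ t ∈ range n, C (n + 1 - t) * A t = ∑ t ∈ range n, C (n + 1 - t) * A t := rfl
      linarith [h]
    have S2 : ∀ n : ℕ, ∑ t ∈ range n, C (n + 1 - t) * A (t + 1)
        = ((n : ℝ) + 2) * A (n + 2) - C 1 * A (n + 1) - C (n + 2) := by
      intro n
      have h := S4 (n + 1)
      rw [Finset.sum_range_succ, show n + 1 - n = 1 from by omega] at h
      push_cast at h ⊢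
      linarith [h]
    -- main strong induction
    have main : ∀ n : ℕ, ∀ m, 1 ≤ m → m ≤ n → A m * A n ≤ A (m - 1) * A (n + 1) := by
      intro n
      induction n using Nat.strong_induction_on with
      | _ n IH =>
        match n, IH with
        | 0, _ => intro m hm hmn; omega
        | (N + 1), IH =>
          have hdiag : A (N + 1) ^ 2 ≤ A N * A (N + 2) := by
            have hsum_eq : ∑ t ∈ range N,
                (C (N + 2) * C (N - t) - C (N + 1) * C (N + 1 - t))
                  * (A (N + 1) * A t - A N * A (t + 1))
                = C (N + 2) * A (N + 1) * ((N : ℝ) * A N)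
                  - C (N + 2) * A N * (((N : ℝ) + 1) * A (N + 1) - C (N + 1))
                  - C (N + 1) * A (N + 1) * (((N : ℝ) + 1) * A (N + 1) - C 1 * A N)
                  + C (N + 1) * A N * (((N : ℝ) + 2) * A (N + 2) - C 1 * A (N + 1) - C (N + 2)) := by
              rw [← S3 N, ← S4 N, ← S1 N, ← S2 N]
              rw [Finset.mul_sum, Finset.mul_sum, Finset.mul_sum, Finset.mul_sum]
              rw [← Finset.sum_sub_distrib, ← Finset.sum_sub_distrib, ← Finset.sum_add_distrib]
              apply Finset.sum_congr rfl
              intro t _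
              ring
            have hterm : ∀ t ∈ range N,
                0 ≤ (C (N + 2) * C (N - t) - C (N + 1) * C (N + 1 - t))
                  * (A (N + 1) * A t - A N * A (t + 1)) := by
              intro t ht
              rw [Finset.mem_range] at ht
              apply mul_nonneg
              · have h := RC (N - t) (N + 1) (by omega) (by omega)
                rw [show N - t + 1 = N + 1 - t from by omega] at h
                nlinarith [h]
              · have h := IH N (by omega) (t + 1) (by omega) (by omega)
                simp only [Nat.add_sub_cancel] at h
                nlinarith [h]
            have hQ := Q N
            have hsum_nonneg : 0 ≤ ∑ t ∈ range N,
                (C (N + 2) * C (N - t) - C (N + 1) * C (N + 1 - t))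
                  * (A (N + 1) * A t - A N * A (t + 1)) := Finset.sum_nonneg hterm
            have key : C (N + 1) * (((N : ℝ) + 2) * (A (N + 2) * A N - A (N + 1) ^ 2))
                = A (N + 1) * (C (N + 2) * A N - C (N + 1) * A (N + 1))
                  + ∑ t ∈ range N,
                    (C (N + 2) * C (N - t) - C (N + 1) * C (N + 1 - t))
                      * (A (N + 1) * A t - A N * A (t + 1)) := by
              rw [hsum_eq]; ring
            have h1 : 0 ≤ A (N + 1) * (C (N + 2) * A N - C (N + 1) * A (N + 1)) :=
              mul_nonneg (hApos (N + 1)).le (by linarith [hQ])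
            have h2 : 0 ≤ C (N + 1) * (((N : ℝ) + 2) * (A (N + 2) * A N - A (N + 1) ^ 2)) := by
              rw [key]; linarith [h1, hsum_nonneg]
            have hN2 : (0 : ℝ) < (N : ℝ) + 2 := by positivity
            nlinarith [h2, mul_pos (hCpos N) hN2]
          intro m hm hmn
          rcases Nat.eq_or_lt_of_le hmn with heq | hlt
          · subst heq
            simp only [Nat.add_sub_cancel]
            nlinarith [hdiag]
          · have h := IH N (by omega) m hm (by omega)
            have hc : 0 < A N * A (N + 1) := mul_pos (hApos N) (hApos (N + 1))
            have hmul : (A m * A N) * (A (N + 1) ^ 2) ≤ (A (m - 1) * A (N + 1)) * (A N * A (N + 2)) :=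
              mul_le_mul h hdiag (sq_nonneg _) (mul_nonneg (hApos _).le (hApos _).le)
            apply le_of_mul_le_mul_right _ hc
            nlinarith [hmul]
    intro m n hm hmn
    exact main n m hm hmn

/-- for `i = 1, …, w` let `(c_{i,k})_{k ≥ 1}` be nonnegative log-convex
real sequences, `C j = ∑ᵢ c_{i,j}`, `(A k)` given by the exponential-formula recursion,
and `B k = k! * A k`.  Then `m B_{m-1} B_{n+1} ≥ (n+1) Bₘ Bₙ` for all `1 ≤ m ≤ n` iff
`∑ᵢ c_{i,2} ≥ (∑ᵢ c_{i,1})²`; moreover these inequalities are equivalent to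
`A_{m-1} A_{n+1} ≥ Aₘ Aₙ` for all `1 ≤ m ≤ n`. -/
theorem stmt15 (w : ℕ) (c : Fin w → ℕ → ℝ)
    (hc_nonneg : ∀ (i : Fin w) (k : ℕ), 1 ≤ k → 0 ≤ c i k)
    (hc_logconvex : ∀ (i : Fin w) (k : ℕ), 1 ≤ k →
      c i (k + 1) ^ 2 ≤ c i k * c i (k + 2))
    (A B : ℕ → ℝ)
    (hA0 : A 0 = 1)
    (hArec : ∀ n : ℕ, ((n : ℝ) + 1) * A (n + 1)
      = ∑ j ∈ Finset.Icc 1 (n + 1), (∑ i : Fin w, c i j) * A (n + 1 - j))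
    (hB : ∀ k : ℕ, B k = (Nat.factorial k : ℝ) * A k) :
    ((∀ m n : ℕ, 1 ≤ m → m ≤ n →
        ((n : ℝ) + 1) * (B m * B n) ≤ (m : ℝ) * (B (m - 1) * B (n + 1))) ↔
      (∑ i : Fin w, c i 1) ^ 2 ≤ ∑ i : Fin w, c i 2) ∧
    ((∀ m n : ℕ, 1 ≤ m → m ≤ n →
        ((n : ℝ) + 1) * (B m * B n) ≤ (m : ℝ) * (B (m - 1) * B (n + 1))) ↔
      (∀ m n : ℕ, 1 ≤ m → m ≤ n → A m * A n ≤ A (m - 1) * A (n + 1))) := by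
  set C : ℕ → ℝ := fun j => ∑ i : Fin w, c i j with hCdef
  have hC0 : ∀ j : ℕ, 1 ≤ j → 0 ≤ C j := fun j hj =>
    Finset.sum_nonneg fun i _ => hc_nonneg i j hj
  have hCl : ∀ k : ℕ, 1 ≤ k → C (k + 1) ^ 2 ≤ C k * C (k + 2) := by
    intro k hk
    have hstep : C (k + 1) ≤ ∑ i : Fin w, Real.sqrt (c i k) * Real.sqrt (c i (k + 2)) := by
      apply Finset.sum_le_sum
      intro i _
      rw [← Real.sqrt_mul (hc_nonneg i k hk)]
      calc c i (k + 1) = Real.sqrt (c i (k + 1) ^ 2) := by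
            rw [Real.sqrt_sq (hc_nonneg i (k + 1) (by omega))]
      _ ≤ Real.sqrt (c i k * c i (k + 2)) := Real.sqrt_le_sqrt (hc_logconvex i k hk)
    have hcs := Finset.sum_mul_sq_le_sq_mul_sq Finset.univ
      (fun i : Fin w => Real.sqrt (c i k)) (fun i : Fin w => Real.sqrt (c i (k + 2)))
    have hs1 : ∑ i : Fin w, Real.sqrt (c i k) ^ 2 = C k :=
      Finset.sum_congr rfl fun i _ => Real.sq_sqrt (hc_nonneg i k hk)
    have hs2 : ∑ i : Fin w, Real.sqrt (c i (k + 2)) ^ 2 = C (k + 2) :=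
      Finset.sum_congr rfl fun i _ => Real.sq_sqrt (hc_nonneg i (k + 2) (by omega))
    rw [hs1, hs2] at hcs
    have hnn : 0 ≤ ∑ i : Fin w, Real.sqrt (c i k) * Real.sqrt (c i (k + 2)) :=
      Finset.sum_nonneg fun i _ => mul_nonneg (Real.sqrt_nonneg _) (Real.sqrt_nonneg _)
    calc C (k + 1) ^ 2 ≤ (∑ i : Fin w, Real.sqrt (c i k) * Real.sqrt (c i (k + 2))) ^ 2 := by
          apply pow_le_pow_left₀ (hC0 (k + 1) (by omega)) hstep
    _ ≤ C k * C (k + 2) := hcs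
  have hrec : ∀ n : ℕ, ((n : ℝ) + 1) * A (n + 1)
      = ∑ k ∈ Finset.range (n + 1), C (k + 1) * A (n - k) := by
    intro n
    rw [hArec n, ← Finset.Ico_add_one_right_eq_Icc, Finset.sum_Ico_eq_sum_range]
    rw [show n + 1 + 1 - 1 = n + 1 from rfl]
    apply Finset.sum_congr rfl
    intro i hi
    rw [Finset.mem_range] at hi
    rw [show 1 + i = i + 1 from by omega, show n + 1 - (i + 1) = n - i from by omega]
  have hA1 : A 1 = C 1 := by
    have h := hrec 0
    rw [Finset.sum_range_one] at h
    norm_num [hA0] at h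
    linarith
  have hA2 : 2 * A 2 = C 1 ^ 2 + C 2 := by
    have h := hrec 1
    rw [Finset.sum_range_succ, Finset.sum_range_one] at h
    norm_num [hA0, hA1] at h
    nlinarith [h]
  -- equivalence between the B-inequality and the A-inequality, pointwise
  have hBA : ∀ m n : ℕ, 1 ≤ m → m ≤ n →
      (((n : ℝ) + 1) * (B m * B n) ≤ (m : ℝ) * (B (m - 1) * B (n + 1)) ↔
        A m * A n ≤ A (m - 1) * A (n + 1)) := by
    intro m n hm _
    obtain ⟨m', rfl⟩ : ∃ m', m = m' + 1 := ⟨m - 1, by omega⟩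
    simp only [Nat.add_sub_cancel]
    have hK : (0 : ℝ) < ((n : ℝ) + 1) * (((m' : ℝ) + 1) * ((Nat.factorial m' : ℝ) * (Nat.factorial n : ℝ))) := by
      positivity
    have e1 : ((n : ℝ) + 1) * (B (m' + 1) * B n)
        = (((n : ℝ) + 1) * (((m' : ℝ) + 1) * ((Nat.factorial m' : ℝ) * (Nat.factorial n : ℝ))))
          * (A (m' + 1) * A n) := by
      rw [hB (m' + 1), hB n, Nat.factorial_succ]
      push_cast
      ring
    have e2 : ((m' + 1 : ℕ) : ℝ) * (B m' * B (n + 1))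
        = (((n : ℝ) + 1) * (((m' : ℝ) + 1) * ((Nat.factorial m' : ℝ) * (Nat.factorial n : ℝ))))
          * (A m' * A (n + 1)) := by
      rw [hB m', hB (n + 1), Nat.factorial_succ]
      push_cast
      ring
    rw [e1, e2]
    exact mul_le_mul_iff_of_pos_left hK
  constructor
  · constructor
    · intro h
      have h11 := h 1 1 le_rfl le_rfl
      rw [hB 1, hB 0, hB 2] at h11
      simp only [Nat.factorial] at h11
      norm_num [hA0, hA1] at h11
      -- h11 : 2 * (C 1 * C 1) ≤ A 2 * 2  (roughly); use hA2
      nlinarith [h11, hA2]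
    · intro hE m n hm hmn
      rw [hBA m n hm hmn]
      exact stmt15_cross C A hC0 hCl hE hA0 hrec m n hm hmn
  · constructor
    · intro h m n hm hmn
      exact (hBA m n hm hmn).mp (h m n hm hmn)
    · intro h m n hm hmn
      exact (hBA m n hm hmn).mpr (h m n hm hmn)
end

section
/- (Hansen's first identity.) Let (r_k)_{k≥0} and (P_n)_{n≥0} be real sequences satisfying (n+1)·P_{n+1} = Σ_{k=0}^n r_k·P_{n−k} for all n ≥ 0, with the convention P_{−1} = 0. Then for every m ≥ 0: m·(m+2)·(P_{m+1}² − P_m·P_{m+2}) = P_{m+1}·(r_0·P_m − P_{m+1}) + Σ_{ℓ=0}^m Σ_{k=0}^ℓ (P_{m−ℓ}·P_{m−k−1} − P_{m−k}·P_{m−ℓ−1})·(r_{k+1}·r_ℓ − r_{ℓ+1}·r_k). -/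
open Finset

lemma tri_sum (N : ℕ) (f : ℕ → ℕ → ℝ) (hf : ∀ k, f k k = 0) :
    ∑ l ∈ range N, ∑ k ∈ range (l + 1), (f k l + f l k)
      = ∑ l ∈ range N, ∑ k ∈ range N, f k l := by
  induction N with
  | zero => simp
  | succ n ih =>
    rw [Finset.sum_range_succ, ih]
    simp only [Finset.sum_range_succ, Finset.sum_add_distrib, hf, add_zero]
    ring

/-- Hansen's first identity: with `P` indexed by `ℤ` so the convention
`P (-1) = 0` can be imposed, and `(n+1) P_{n+1} = ∑_{k=0}^n r_k P_{n-k}` for all `n ≥ 0`,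
for every `m ≥ 0` one has
`m (m+2) (P_{m+1}² - Pₘ P_{m+2}) = P_{m+1} (r₀ Pₘ - P_{m+1})
  + ∑_{ℓ=0}^m ∑_{k=0}^ℓ (P_{m-ℓ} P_{m-k-1} - P_{m-k} P_{m-ℓ-1}) (r_{k+1} r_ℓ - r_{ℓ+1} r_k)`. -/
theorem stmt16 (r : ℕ → ℝ) (P : ℤ → ℝ)
    (hPneg : P (-1) = 0)
    (hPrec : ∀ n : ℕ, ((n : ℝ) + 1) * P ((n : ℤ) + 1)
      = ∑ k ∈ Finset.range (n + 1), r k * P ((n : ℤ) - (k : ℤ))) :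
    ∀ m : ℕ, (m : ℝ) * ((m : ℝ) + 2) * (P ((m : ℤ) + 1) ^ 2 - P (m : ℤ) * P ((m : ℤ) + 2))
      = P ((m : ℤ) + 1) * (r 0 * P (m : ℤ) - P ((m : ℤ) + 1))
        + ∑ l ∈ Finset.range (m + 1), ∑ k ∈ Finset.range (l + 1),
            (P ((m : ℤ) - (l : ℤ)) * P ((m : ℤ) - (k : ℤ) - 1)
              - P ((m : ℤ) - (k : ℤ)) * P ((m : ℤ) - (l : ℤ) - 1))
            * (r (k + 1) * r l - r (l + 1) * r k) := by
  intro m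
  -- h1 : basic recursion at m
  have h1 : ∑ k ∈ range (m + 1), r k * P ((m : ℤ) - (k : ℤ))
      = ((m : ℝ) + 1) * P ((m : ℤ) + 1) := (hPrec m).symm
  -- h2 : shifted sum equals m * P m
  have h2 : ∑ k ∈ range (m + 1), r k * P ((m : ℤ) - (k : ℤ) - 1) = (m : ℝ) * P (m : ℤ) := by
    cases m with
    | zero => simp [hPneg]
    | succ n =>
      rw [Finset.sum_range_succ]
      have hc : ∀ k ∈ range (n + 1),
          r k * P (((n + 1 : ℕ) : ℤ) - (k : ℤ) - 1) = r k * P ((n : ℤ) - (k : ℤ)) := by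
        intro k _
        congr 1
        push_cast
        ring
      rw [Finset.sum_congr rfl hc, ← hPrec n]
      have he : ((n + 1 : ℕ) : ℤ) - ((n + 1 : ℕ) : ℤ) - 1 = -1 := by push_cast; ring
      rw [he, hPneg]
      push_cast
      ring
  -- extended recursion (one extra vanishing term)
  have base : ∑ k ∈ range (m + 2), r k * P ((m : ℤ) - (k : ℤ))
      = ((m : ℝ) + 1) * P ((m : ℤ) + 1) := by
    rw [Finset.sum_range_succ, h1]
    have he : (m : ℤ) - ((m + 1 : ℕ) : ℤ) = -1 := by push_cast; ring
    rw [he, hPneg]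
    ring
  -- h3 : sum of r(k+1) P(m-k-1)
  have h3 : ∑ k ∈ range (m + 1), r (k + 1) * P ((m : ℤ) - (k : ℤ) - 1)
      = ((m : ℝ) + 1) * P ((m : ℤ) + 1) - r 0 * P (m : ℤ) := by
    have := Finset.sum_range_succ' (fun k => r k * P ((m : ℤ) - (k : ℤ))) (m + 1)
    rw [base] at this
    have hc : ∀ k ∈ range (m + 1),
        r (k + 1) * P ((m : ℤ) - ((k + 1 : ℕ) : ℤ)) = r (k + 1) * P ((m : ℤ) - (k : ℤ) - 1) := by
      intro k _
      congr 1
      push_cast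
      ring
    rw [Finset.sum_congr rfl hc] at this
    simp only [Nat.cast_zero, sub_zero] at this
    linarith [this]
  -- hB : recursion at m+1 split
  have hB : ((m : ℝ) + 2) * P ((m : ℤ) + 2)
      = r 0 * P ((m : ℤ) + 1) + ∑ l ∈ range (m + 1), r (l + 1) * P ((m : ℤ) - (l : ℤ)) := by
    have h := hPrec (m + 1)
    rw [Finset.sum_range_succ' (fun k => r k * P (((m + 1 : ℕ) : ℤ) - (k : ℤ))) (m + 1)] at h
    have hc : ∀ k ∈ range (m + 1),
        r (k + 1) * P (((m + 1 : ℕ) : ℤ) - ((k + 1 : ℕ) : ℤ)) = r (k + 1) * P ((m : ℤ) - (k : ℤ)) := by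
      intro k _
      congr 1
      push_cast
      ring
    rw [Finset.sum_congr rfl hc] at h
    have he1 : (((m + 1 : ℕ) : ℤ) + 1) = (m : ℤ) + 2 := by push_cast; ring
    have he2 : (((m + 1 : ℕ) : ℤ) - ((0 : ℕ) : ℤ)) = (m : ℤ) + 1 := by push_cast; ring
    rw [he1, he2] at h
    push_cast at h
    linarith [h]
  -- triangle sum to rectangle
  have key : ∑ l ∈ Finset.range (m + 1), ∑ k ∈ Finset.range (l + 1),
        (P ((m : ℤ) - (l : ℤ)) * P ((m : ℤ) - (k : ℤ) - 1)
          - P ((m : ℤ) - (k : ℤ)) * P ((m : ℤ) - (l : ℤ) - 1))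
        * (r (k + 1) * r l - r (l + 1) * r k)
      = ∑ l ∈ range (m + 1), ∑ k ∈ range (m + 1),
          ((r (k + 1) * P ((m : ℤ) - (k : ℤ) - 1)) * (r l * P ((m : ℤ) - (l : ℤ)))
            - (r k * P ((m : ℤ) - (k : ℤ) - 1)) * (r (l + 1) * P ((m : ℤ) - (l : ℤ)))) := by
    rw [← tri_sum (m + 1)
      (fun k l => (r (k + 1) * P ((m : ℤ) - (k : ℤ) - 1)) * (r l * P ((m : ℤ) - (l : ℤ)))
            - (r k * P ((m : ℤ) - (k : ℤ) - 1)) * (r (l + 1) * P ((m : ℤ) - (l : ℤ))))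
      (fun k => by ring)]
    apply Finset.sum_congr rfl
    intro l _
    apply Finset.sum_congr rfl
    intro k _
    ring
  -- rectangle factorization
  have rect : ∑ l ∈ range (m + 1), ∑ k ∈ range (m + 1),
        ((r (k + 1) * P ((m : ℤ) - (k : ℤ) - 1)) * (r l * P ((m : ℤ) - (l : ℤ)))
          - (r k * P ((m : ℤ) - (k : ℤ) - 1)) * (r (l + 1) * P ((m : ℤ) - (l : ℤ))))
      = (∑ k ∈ range (m + 1), r (k + 1) * P ((m : ℤ) - (k : ℤ) - 1))
          * (∑ l ∈ range (m + 1), r l * P ((m : ℤ) - (l : ℤ)))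
        - (∑ k ∈ range (m + 1), r k * P ((m : ℤ) - (k : ℤ) - 1))
          * (∑ l ∈ range (m + 1), r (l + 1) * P ((m : ℤ) - (l : ℤ))) := by
    rw [Finset.sum_mul_sum, Finset.sum_mul_sum, ← Finset.sum_sub_distrib]
    rw [Finset.sum_comm]
    apply Finset.sum_congr rfl
    intro l _
    rw [← Finset.sum_sub_distrib]
  rw [key, rect, h1, h2, h3]
  linear_combination (-(m : ℝ) * P (m : ℤ)) * hB
end

section
/- (Hansen's second identity.) Let (r_k)_{k≥0} and (P_n)_{n≥0} be real sequences satisfying (n+1)·P_{n+1} = Σ_{k=0}^n r_k·P_{n−k} for all n ≥ 0. Then for every m ≥ 0: r_{m+1}·(m+2)·(P_{m+1}·P_{m+3} − P_{m+2}²) = P_{m+1}·(r_{m+2}·P_{m+2} − r_{m+1}·P_{m+3}) + Σ_{k=0}^m (P_{m−k}·P_{m+2} − P_{m+1}·P_{m−k+1})·(r_{m+2}·r_k − r_{k+1}·r_{m+1}). -/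
/-- Hansen's second identity: if `(n+1) P_{n+1} = ∑_{k=0}^n r_k P_{n-k}`
for all `n ≥ 0`, then for every `m ≥ 0`:
`r_{m+1} (m+2) (P_{m+1} P_{m+3} - P_{m+2}²) = P_{m+1} (r_{m+2} P_{m+2} - r_{m+1} P_{m+3})
  + ∑_{k=0}^m (P_{m-k} P_{m+2} - P_{m+1} P_{m-k+1}) (r_{m+2} r_k - r_{k+1} r_{m+1})`. -/
theorem stmt17 (r P : ℕ → ℝ)
    (hPrec : ∀ n : ℕ, ((n : ℝ) + 1) * P (n + 1)
      = ∑ k ∈ Finset.range (n + 1), r k * P (n - k)) :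
    ∀ m : ℕ, r (m + 1) * ((m : ℝ) + 2) * (P (m + 1) * P (m + 3) - P (m + 2) ^ 2)
      = P (m + 1) * (r (m + 2) * P (m + 2) - r (m + 1) * P (m + 3))
        + ∑ k ∈ Finset.range (m + 1),
            (P (m - k) * P (m + 2) - P (m + 1) * P (m - k + 1))
              * (r (m + 2) * r k - r (k + 1) * r (m + 1)) := by
  intro m
  have h1 : ∑ k ∈ Finset.range (m + 1), r k * P (m - k) = ((m : ℝ) + 1) * P (m + 1) :=
    (hPrec m).symm
  have e1 : ((m : ℝ) + 2) * P (m + 2) = ∑ k ∈ Finset.range (m + 2), r k * P (m + 1 - k) := by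
    have := hPrec (m + 1); push_cast at this ⊢; linarith
  have e2 : ((m : ℝ) + 3) * P (m + 3) = ∑ k ∈ Finset.range (m + 3), r k * P (m + 2 - k) := by
    have := hPrec (m + 2); push_cast at this ⊢; linarith
  have h2 : ∑ k ∈ Finset.range (m + 1), r (k + 1) * P (m - k)
      = ((m : ℝ) + 2) * P (m + 2) - r 0 * P (m + 1) := by
    have hs := Finset.sum_range_succ' (fun k => r k * P (m + 1 - k)) (m + 1)
    have hc : ∀ k ∈ Finset.range (m + 1),
        r (k + 1) * P (m + 1 - (k + 1)) = r (k + 1) * P (m - k) := by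
      intro k hk; congr 2; omega
    rw [Finset.sum_congr rfl hc] at hs
    rw [e1, hs]; simp
  have h3 : ∑ k ∈ Finset.range (m + 1), r k * P (m - k + 1)
      = ((m : ℝ) + 2) * P (m + 2) - r (m + 1) * P 0 := by
    have hs := Finset.sum_range_succ (fun k => r k * P (m + 1 - k)) (m + 1)
    have hc : ∀ k ∈ Finset.range (m + 1),
        r k * P (m + 1 - k) = r k * P (m - k + 1) := by
      intro k hk; simp only [Finset.mem_range] at hk; congr 2; omega
    rw [Finset.sum_congr rfl hc] at hs
    rw [e1, hs]; simp
  have h4 : ∑ k ∈ Finset.range (m + 1), r (k + 1) * P (m - k + 1)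
      = ((m : ℝ) + 3) * P (m + 3) - r 0 * P (m + 2) - r (m + 2) * P 0 := by
    have hs := Finset.sum_range_succ' (fun k => r k * P (m + 2 - k)) (m + 2)
    have hs2 := Finset.sum_range_succ (fun k => r (k + 1) * P (m + 2 - (k + 1))) (m + 1)
    have hc : ∀ k ∈ Finset.range (m + 1),
        r (k + 1) * P (m + 2 - (k + 1)) = r (k + 1) * P (m - k + 1) := by
      intro k hk; simp only [Finset.mem_range] at hk; congr 2; omega
    rw [Finset.sum_congr rfl hc] at hs2
    rw [e2, hs, hs2]; simp
  have hsum : ∑ k ∈ Finset.range (m + 1),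
      (P (m - k) * P (m + 2) - P (m + 1) * P (m - k + 1))
        * (r (m + 2) * r k - r (k + 1) * r (m + 1))
      = r (m + 2) * P (m + 2) * (∑ k ∈ Finset.range (m + 1), r k * P (m - k))
        - r (m + 1) * P (m + 2) * (∑ k ∈ Finset.range (m + 1), r (k + 1) * P (m - k))
        - r (m + 2) * P (m + 1) * (∑ k ∈ Finset.range (m + 1), r k * P (m - k + 1))
        + r (m + 1) * P (m + 1) * (∑ k ∈ Finset.range (m + 1), r (k + 1) * P (m - k + 1)) := by
    simp only [Finset.mul_sum, ← Finset.sum_sub_distrib, ← Finset.sum_add_distrib]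
    apply Finset.sum_congr rfl
    intros; ring
  rw [hsum, h1, h2, h3, h4]
  ring
end

section
/- Let (r_k)_{k≥0} be nonnegative reals and let (P_n)_{n≥0} satisfy P_0 > 0 and the recursion (n+1)·P_{n+1} = Σ_{k=0}^n r_k·P_{n−k} for all n ≥ 0. Fix m ≥ 1 and assume P_n > 0 for 1 ≤ n ≤ m and that (P_n) is strictly log-concave up to m, i.e., P_n² > P_{n−1}·P_{n+1} for n = 1, …, m. Then r_0·P_m − P_{m+1} > 0. -/
/-- if `(r k)` is nonnegative, `P 0 > 0`, `(n+1) P_{n+1} = ∑_{k=0}^n r_k P_{n-k}`,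
and for a fixed `m ≥ 1` one has `P n > 0` for `1 ≤ n ≤ m` and strict log-concavity
`P_{n-1} P_{n+1} < P_n²` for `n = 1, …, m`, then `r₀ Pₘ - P_{m+1} > 0`. -/
theorem stmt18 (r P : ℕ → ℝ)
    (hr_nonneg : ∀ k : ℕ, 0 ≤ r k)
    (hP0 : 0 < P 0)
    (hPrec : ∀ n : ℕ, ((n : ℝ) + 1) * P (n + 1)
      = ∑ k ∈ Finset.range (n + 1), r k * P (n - k))
    (m : ℕ) (hm : 1 ≤ m)
    (hP_pos : ∀ n : ℕ, 1 ≤ n → n ≤ m → 0 < P n)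
    (hP_strict_logconcave : ∀ n : ℕ, 1 ≤ n → n ≤ m → P (n - 1) * P (n + 1) < P n ^ 2) :
    0 < r 0 * P m - P (m + 1) := by
  have hP1 : P 1 = r 0 * P 0 := by
    have := hPrec 0
    simpa using this
  have key : ∀ n, 1 ≤ n → n ≤ m → P (n + 1) < r 0 * P n := by
    intro n
    induction n with
    | zero => omega
    | succ k ih =>
      intro _ hle
      rcases Nat.eq_zero_or_pos k with hk | hk
      · subst hk
        have hlc := hP_strict_logconcave 1 le_rfl hm
        norm_num at hlc
        have h1 : 0 < P 1 := hP_pos 1 le_rfl hm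
        nlinarith
      · have hkm : k ≤ m := le_trans (Nat.le_succ k) hle
        have ihv := ih hk hkm
        have hlc := hP_strict_logconcave (k + 1) (by omega) hle
        have hPk : 0 < P k := hP_pos k hk hkm
        have hPk1 : 0 < P (k + 1) := hP_pos (k + 1) (by omega) hle
        have hs : (k + 1 : ℕ) - 1 = k := by omega
        rw [hs] at hlc
        nlinarith
  have hPm : 0 < P m := hP_pos m hm le_rfl
  have := key m hm le_rfl
  linarith
end

section
/- Let (r_k)_{k≥0} be strictly positive reals that are strictly log-convex (r_{k+1}² < r_k·r_{k+2} for all k ≥ 0) with r_0² < r_1, and let (P_n)_{n≥0} satisfy P_0 > 0 and the recursion (n+1)·P_{n+1} = Σ_{k=0}^n r_k·P_{n−k} for all n ≥ 0. Then for every m ≥ 0: r_{m+2}·P_{m+2} − r_{m+1}·P_{m+3} > 0. -/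
/-- if `(r k)` is strictly positive and strictly log-convex
(`r_{k+1}² < r_k r_{k+2}` for all `k ≥ 0`) with `r₀² < r₁`, and `P 0 > 0` with
`(n+1) P_{n+1} = ∑_{k=0}^n r_k P_{n-k}` for all `n ≥ 0`, then for every `m ≥ 0`:
`r_{m+2} P_{m+2} - r_{m+1} P_{m+3} > 0`. -/
theorem stmt19 (r P : ℕ → ℝ)
    (hr_pos : ∀ k : ℕ, 0 < r k)
    (hr_strict_logconvex : ∀ k : ℕ, r (k + 1) ^ 2 < r k * r (k + 2))
    (hr01 : r 0 ^ 2 < r 1)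
    (hP0 : 0 < P 0)
    (hPrec : ∀ n : ℕ, ((n : ℝ) + 1) * P (n + 1)
      = ∑ k ∈ Finset.range (n + 1), r k * P (n - k)) :
    ∀ m : ℕ, 0 < r (m + 2) * P (m + 2) - r (m + 1) * P (m + 3) := by
  -- positivity of P
  have hPpos : ∀ n, 0 < P n := by
    intro n
    induction n using Nat.strong_induction_on with
    | _ n ih =>
      match n with
      | 0 => exact hP0
      | m + 1 =>
        have h := hPrec m
        have hsum : 0 < ∑ k ∈ Finset.range (m + 1), r k * P (m - k) := by
          apply Finset.sum_pos
          · intro k hk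
            exact mul_pos (hr_pos k) (ih (m - k) (by omega))
          · exact ⟨0, Finset.mem_range.mpr (Nat.succ_pos m)⟩
        rw [← h] at hsum
        have hm : (0:ℝ) < (m:ℝ) + 1 := by positivity
        nlinarith
  -- log-convexity gives monotone ratios: r(j+1)/r j ≤ r(n+1)/r n for j ≤ n
  have hratioD : ∀ d j : ℕ, r (j + 1) * r (j + d) ≤ r j * r (j + d + 1) := by
    intro d
    induction d with
    | zero => intro j; exact le_of_eq (mul_comm _ _)
    | succ d ih =>
      intro j
      have e1 : j + (d + 1) = j + d + 1 := rfl
      rw [e1]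
      have h1 := ih j
      have h2 := hr_strict_logconvex (j + d)
      have e2 : j + d + 2 = j + d + 1 + 1 := rfl
      rw [e2]
      nlinarith [mul_le_mul_of_nonneg_right h1 (hr_pos (j + d + 2)).le,
        mul_lt_mul_of_pos_left h2 (hr_pos (j + 1)),
        hr_pos (j + d + 1), hr_pos j, hr_pos (j + d + 2)]
  have hratio : ∀ j n : ℕ, j ≤ n → r (j + 1) * r n ≤ r j * r (n + 1) := by
    intro j n hjn
    obtain ⟨d, rfl⟩ := Nat.exists_eq_add_of_le hjn
    exact hratioD d j
  -- r 0 * r n < r (n+1)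
  have hr0n : ∀ n : ℕ, r 0 * r n < r (n + 1) := by
    intro n
    induction n with
    | zero => nlinarith [hr01]
    | succ n ih =>
      have h2 := hr_strict_logconvex n
      nlinarith [mul_lt_mul_of_pos_right ih (hr_pos (n + 2)),
        mul_lt_mul_of_pos_left h2 (hr_pos 0),
        hr_pos (n + 1), hr_pos 0, hr_pos (n + 2)]
  -- key inequality
  have key : ∀ n : ℕ, r n * P (n + 2) < r (n + 1) * P (n + 1) := by
    intro n
    have h2 := hPrec (n + 1)
    rw [Finset.sum_range_succ'] at h2
    simp only [Nat.succ_sub_succ_eq_sub, Nat.sub_zero, Nat.add_sub_cancel] at h2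
    push_cast at h2
    -- h2 : (n + 1 + 1) * P (n + 1 + 1) = (∑ i in range (n+1), r (i+1) * P (n - i)) + r 0 * P (n+1)
    set S1 : ℝ := ∑ i ∈ Finset.range (n + 1), r (i + 1) * P (n - i) with hS1def
    have hS2 : ((n:ℝ) + 1) * P (n + 1) = ∑ k ∈ Finset.range (n + 1), r k * P (n - k) := hPrec n
    set S2 : ℝ := ∑ k ∈ Finset.range (n + 1), r k * P (n - k) with hS2def
    have hA : r n * S1 ≤ r (n + 1) * S2 := by
      rw [hS1def, hS2def, Finset.mul_sum, Finset.mul_sum]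
      apply Finset.sum_le_sum
      intro i hi
      have hi' : i ≤ n := by
        have := Finset.mem_range.mp hi; omega
      have hrr := hratio i n hi'
      have hp := (hPpos (n - i)).le
      nlinarith [mul_le_mul_of_nonneg_right hrr hp]
    have h2' : ((n:ℝ) + 2) * P (n + 2) = S1 + r 0 * P (n + 1) := by
      have e : n + 1 + 1 = n + 2 := rfl
      rw [e] at h2
      linarith [h2]
    have hlt : (r 0 * r n) * P (n + 1) < r (n + 1) * P (n + 1) :=
      mul_lt_mul_of_pos_right (hr0n n) (hPpos (n + 1))
    have h4 : r n * (((n:ℝ) + 2) * P (n + 2)) < r (n + 1) * (((n:ℝ) + 2) * P (n + 1)) := by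
      have e1 : r n * (((n:ℝ) + 2) * P (n + 2)) = r n * S1 + (r 0 * r n) * P (n + 1) := by
        rw [h2']; ring
      have e2 : r (n + 1) * (((n:ℝ) + 2) * P (n + 1)) = r (n + 1) * S2 + r (n + 1) * P (n + 1) := by
        rw [← hS2]; ring
      linarith
    have hn2 : (0:ℝ) < (n:ℝ) + 2 := by positivity
    nlinarith [h4, hn2]
  intro m
  have h := key (m + 1)
  have e1 : m + 1 + 2 = m + 3 := rfl
  have e2 : m + 1 + 1 = m + 2 := rfl
  rw [e1, e2] at h
  linarith
end
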